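/- arXiv:1207.6488 — 9 statements merged into one kernel-verified Lean document; each statement's English description precedes it below -/
import Mathlib

section
/- For all integers n, m, k with 2 ≤ m ≤ n and m−1 ≤ k ≤ n−1, one has (∏_{i=k+1}^{n−1} (1 − (m(m−1))/((i+1)i))) · (m(m−1))/((k+1)k) = (m(m−1))/(n·k) · ∏_{i=k+1}^{n−1} ((i+1−m)(i+m))/i², where empty products equal 1. (The left-hand side is the probability, obtained from a sequence of Bernoulli trials, that the most recent coalescence of m sampled lineages in the Yule n-tree occurs at the k-th bifurcation event; the right-hand side is the closed form p^{(m)}_{n,k} of Lemma 1.) -/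
lemma telescope_aux (a b : ℕ) (ha : 1 ≤ a) (hab : a ≤ b + 1) :
    ∏ i ∈ Finset.Icc a b, (i : ℝ) / ((i : ℝ) + 1) = (a : ℝ) / ((b : ℝ) + 1) := by
  induction b with
  | zero =>
      interval_cases a <;> simp
  | succ b ih =>
      rcases Nat.lt_or_ge a (b + 2) with h | h
      · have hab' : a ≤ b + 1 := Nat.lt_succ_iff.mp h
        rw [Finset.prod_Icc_succ_top hab', ih hab']
        have hb : (b : ℝ) + 1 ≠ 0 := by positivity
        push_cast
        field_simp
      · have : a = b + 2 := le_antisymm hab h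
        subst this
        rw [Finset.Icc_eq_empty (by omega)]
        push_cast
        rw [Finset.prod_empty, eq_comm, div_eq_one_iff_eq (by positivity)]
        ring

/-- For `2 ≤ m ≤ n` and `m-1 ≤ k ≤ n-1`,
`(∏_{i=k+1}^{n-1} (1 − m(m−1)/((i+1)i))) · m(m−1)/((k+1)k)
   = m(m−1)/(nk) · ∏_{i=k+1}^{n-1} (i+1−m)(i+m)/i²`. -/
theorem statement1 (n m k : ℕ) (hm : 2 ≤ m) (hmn : m ≤ n)
    (hk1 : m - 1 ≤ k) (hk2 : k ≤ n - 1) :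
    (∏ i ∈ Finset.Icc (k + 1) (n - 1),
        (1 - ((m : ℝ) * ((m : ℝ) - 1)) / (((i : ℝ) + 1) * (i : ℝ))))
      * (((m : ℝ) * ((m : ℝ) - 1)) / (((k : ℝ) + 1) * (k : ℝ)))
      = ((m : ℝ) * ((m : ℝ) - 1)) / ((n : ℝ) * (k : ℝ))
        * ∏ i ∈ Finset.Icc (k + 1) (n - 1),
            (((i : ℝ) + 1 - (m : ℝ)) * ((i : ℝ) + (m : ℝ))) / (i : ℝ) ^ 2 := by
  have hk : 1 ≤ k := by omega
  have hstep : ∀ i ∈ Finset.Icc (k + 1) (n - 1),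
      (1 - ((m : ℝ) * ((m : ℝ) - 1)) / (((i : ℝ) + 1) * (i : ℝ)))
        = ((((i : ℝ) + 1 - (m : ℝ)) * ((i : ℝ) + (m : ℝ))) / (i : ℝ) ^ 2)
          * ((i : ℝ) / ((i : ℝ) + 1)) := by
    intro i hi
    have hi1 : k + 1 ≤ i := (Finset.mem_Icc.mp hi).1
    have hipos : (0 : ℝ) < (i : ℝ) := by
      have : 2 ≤ i := by omega
      exact_mod_cast Nat.lt_of_lt_of_le Nat.zero_lt_two this
    have hi1pos : (0 : ℝ) < (i : ℝ) + 1 := by linarith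
    field_simp
    ring
  rw [Finset.prod_congr rfl hstep, Finset.prod_mul_distrib,
    telescope_aux (k + 1) (n - 1) (by omega) (by omega)]
  have hn1 : ((n - 1 : ℕ) : ℝ) + 1 = (n : ℝ) := by
    have : (n - 1) + 1 = n := by omega
    exact_mod_cast congrArg (Nat.cast : ℕ → ℝ) this
  rw [hn1]
  have hkpos : (0 : ℝ) < (k : ℝ) := by exact_mod_cast hk
  have hnpos : (0 : ℝ) < (n : ℝ) := by
    have : 0 < n := by omega
    exact_mod_cast this
  have hs : ((k + 1 : ℕ) : ℝ) / (n : ℝ) * ((m : ℝ) * ((m : ℝ) - 1) / (((k : ℝ) + 1) * (k : ℝ)))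
      = (m : ℝ) * ((m : ℝ) - 1) / ((n : ℝ) * (k : ℝ)) := by
    push_cast
    field_simp
  linear_combination (∏ i ∈ Finset.Icc (k + 1) (n - 1),
      (((i : ℝ) + 1 - (m : ℝ)) * ((i : ℝ) + (m : ℝ))) / (i : ℝ) ^ 2) * hs
end

section
/- For all integers m, n with 2 ≤ m ≤ n, one has ∑_{k=m−1}^{n−1} (m(m−1))/(n·k) · ∏_{i=k+1}^{n−1} ((i+1−m)(i+m))/i² = 1; that is, the numbers p^{(m)}_{n,k}, k = m−1, …, n−1, form a probability distribution. -/
open Finset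

private lemma tele (f : ℕ → ℝ) (a b : ℕ) (h : a ≤ b) :
    ∑ k ∈ Finset.Ico a b, (f (k + 1) - f k) = f b - f a := by
  induction b, h using Nat.le_induction with
  | base => simp
  | succ b hb ih =>
      rw [Finset.sum_Ico_succ_top hb, ih]
      ring

/-- For `2 ≤ m ≤ n`, the numbers
`p^{(m)}_{n,k} = m(m−1)/(nk) · ∏_{i=k+1}^{n-1} (i+1−m)(i+m)/i²`, for
`k = m−1, …, n−1`, sum up to one. -/
theorem statement2 (m n : ℕ) (hm : 2 ≤ m) (hmn : m ≤ n) :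
    ∑ k ∈ Finset.Icc (m - 1) (n - 1),
      ((m : ℝ) * ((m : ℝ) - 1)) / ((n : ℝ) * (k : ℝ))
        * ∏ i ∈ Finset.Icc (k + 1) (n - 1),
            (((i : ℝ) + 1 - (m : ℝ)) * ((i : ℝ) + (m : ℝ))) / (i : ℝ) ^ 2 = 1 := by
  have hn2 : 2 ≤ n := le_trans hm hmn
  have hn0 : 0 < n := by omega
  set g : ℕ → ℝ := fun i => (((i : ℝ) + 1 - (m : ℝ)) * ((i : ℝ) + (m : ℝ))) / (i : ℝ) ^ 2
    with hg
  set a : ℕ → ℝ := fun k => (k : ℝ) / (n : ℝ) * ∏ i ∈ Finset.Icc k (n - 1), g i with ha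
  have hIcc : ∀ c : ℕ, Finset.Icc c (n - 1) = Finset.Ico c n := by
    intro c
    rw [← Finset.Ico_add_one_right_eq_Icc]
    congr 1
    omega
  have key : ∀ k ∈ Finset.Icc (m - 1) (n - 1),
      ((m : ℝ) * ((m : ℝ) - 1)) / ((n : ℝ) * (k : ℝ))
        * ∏ i ∈ Finset.Icc (k + 1) (n - 1), g i = a (k + 1) - a k := by
    intro k hk
    simp only [Finset.mem_Icc] at hk
    have hk1 : 1 ≤ k := by omega
    have hkn : k < n := by omega
    have hprod : ∏ i ∈ Finset.Icc k (n - 1), g i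
        = g k * ∏ i ∈ Finset.Icc (k + 1) (n - 1), g i := by
      rw [hIcc, hIcc, Finset.prod_eq_prod_Ico_succ_bot hkn]
    simp only [ha, hprod]
    have hkR : (k : ℝ) ≠ 0 := by positivity
    have hnR : (n : ℝ) ≠ 0 := by positivity
    have : ((m : ℝ) * ((m : ℝ) - 1)) / ((n : ℝ) * (k : ℝ))
        = ((k : ℝ) + 1) / (n : ℝ) - (k : ℝ) / (n : ℝ) * g k := by
      rw [hg]
      field_simp
      ring
    rw [this]
    push_cast
    ring
  rw [Finset.sum_congr rfl key, hIcc (m - 1), tele a (m - 1) n (by omega)]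
  have han : a n = 1 := by
    have : Finset.Icc n (n - 1) = ∅ := by
      rw [Finset.Icc_eq_empty_iff]; omega
    simp [ha, this]
    omega
  have ham : a (m - 1) = 0 := by
    have hmem : m - 1 ∈ Finset.Icc (m - 1) (n - 1) := by
      simp only [Finset.mem_Icc]; omega
    have hz : g (m - 1) = 0 := by
      have : ((m - 1 : ℕ) : ℝ) = (m : ℝ) - 1 := by
        push_cast [Nat.cast_sub (by omega : 1 ≤ m)]; ring
      simp [hg, this]
    simp [ha, Finset.prod_eq_zero hmem hz]
  rw [han, ham]
  ring
end

section
/- Fix an integer n ≥ 2. Let T_1, …, T_n be independent random variables with T_i exponentially distributed with rate i, and let K be a random variable with values in {1, …, n−1}, independent of (T_1, …, T_n), with P(K = k) = 2(n+1)/((n−1)(k+2)(k+1)). Set U_n = T_1 + … + T_n and τ^{(n)} = T_{K+1} + … + T_n. Then for all real x ≥ 0 and y ≥ 0, E[exp(−x·U_n − y·τ^{(n)})] = (2(n+1)·b_{n,x+y}/(n−1)) · ∑_{k=1}^{n−1} b_{k,x} / ((k+2)(k+1)·b_{k,x+y}). -/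
open MeasureTheory ProbabilityTheory Real Set

lemma meas_exp_aux (s : ℝ) : Measurable fun t : ℝ => ENNReal.ofReal (Real.exp (-s * t)) :=
  ((measurable_const.mul measurable_id).exp).ennreal_ofReal

lemma meas_expPDF (r : ℝ) : Measurable (exponentialPDF r) :=
  (measurable_exponentialPDFReal r).ennreal_ofReal

lemma exp_lintegral_expMeasure (r s : ℝ) (hr : 0 < r) (hs : 0 ≤ s) :
    ∫⁻ t, ENNReal.ofReal (Real.exp (-s * t)) ∂(expMeasure r) = ENNReal.ofReal (r / (s + r)) := by
  have hsr : 0 < s + r := by linarith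
  rw [expMeasure, gammaMeasure]
  have hg : Measurable (gammaPDF 1 r) := (measurable_gammaPDFReal 1 r).ennreal_ofReal
  rw [lintegral_withDensity_eq_lintegral_mul _ hg (meas_exp_aux s)]
  have hpt : ∀ t : ℝ, ((gammaPDF 1 r) * fun t => ENNReal.ofReal (Real.exp (-s * t))) t
      = ENNReal.ofReal (r / (s + r)) * exponentialPDF (s + r) t := by
    intro t
    simp only [Pi.mul_apply]
    rcases lt_or_ge t 0 with h | h
    · rw [gammaPDF_of_neg h, exponentialPDF_of_neg h, zero_mul, mul_zero]
    · rw [show gammaPDF 1 r t = exponentialPDF r t from rfl, exponentialPDF_of_nonneg h,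
        exponentialPDF_of_nonneg h, ← ENNReal.ofReal_mul (by positivity),
        ← ENNReal.ofReal_mul (by positivity)]
      congr 1
      rw [show r * rexp (-(r * t)) * rexp (-s * t) = r * rexp (-(r*t) + -s*t) by
        rw [Real.exp_add]; ring]
      rw [show r / (s + r) * ((s + r) * rexp (-((s + r) * t))) = r * rexp (-((s+r)*t)) by
        field_simp]
      ring_nf
  simp_rw [hpt]
  rw [lintegral_const_mul _ (meas_expPDF (s+r)), lintegral_exponentialPDF_eq_one hsr, mul_one]

lemma meas_exp_fun (s : ℝ) : Measurable (fun t : ℝ => Real.exp (s * t)) :=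
  (measurable_id.const_mul s).exp

lemma exp_integrable_expMeasure (r s : ℝ) (hr : 0 < r) (hs : 0 ≤ s) :
    Integrable (fun t => Real.exp (-s * t)) (expMeasure r) := by
  refine ⟨(meas_exp_fun (-s)).aestronglyMeasurable, ?_⟩
  rw [hasFiniteIntegral_iff_ofReal (ae_of_all _ fun t => (Real.exp_pos _).le),
    exp_lintegral_expMeasure r s hr hs]
  exact ENNReal.ofReal_lt_top

lemma exp_integral_expMeasure (r s : ℝ) (hr : 0 < r) (hs : 0 ≤ s) :
    ∫ t, Real.exp (-s * t) ∂(expMeasure r) = r / (s + r) := by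
  rw [integral_eq_lintegral_of_nonneg_ae (ae_of_all _ fun t => (Real.exp_pos _).le)
    (meas_exp_fun (-s)).aestronglyMeasurable,
    exp_lintegral_expMeasure r s hr hs, ENNReal.toReal_ofReal (by positivity)]

set_option maxHeartbeats 1000000 in

/-- Joint Laplace transform of the height `U_n` of the Yule `n`-tree and of the
time `τ⁽ⁿ⁾ = T_{K+1} + … + T_n` to the most recent common ancestor of two
randomly sampled tips:
`E[e^{−x·U_n − y·τ⁽ⁿ⁾}] = (2(n+1) b_{n,x+y}/(n−1)) ∑_{k=1}^{n−1} b_{k,x}/((k+2)(k+1) b_{k,x+y})`,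
where `b_{k,x} = ∏_{i=1}^k i/(x+i)`. -/
theorem statement5 {Ω : Type*} [MeasureSpace Ω] [IsProbabilityMeasure (ℙ : Measure Ω)]
    (n : ℕ) (hn : 2 ≤ n) (T : ℕ → Ω → ℝ) (K : Ω → ℕ)
    (hTmeas : ∀ i, Measurable (T i))
    (hTindep : iIndepFun T ℙ)
    (hTexp : ∀ i ∈ Finset.Icc 1 n, Measure.map (T i) ℙ = expMeasure i)
    (hKmeas : Measurable K)
    (hKrange : ∀ ω, K ω ∈ Finset.Icc 1 (n - 1))
    (hKindep : IndepFun (fun ω (i : Fin n) => T (i + 1) ω) K ℙ)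
    (hKdist : ∀ k ∈ Finset.Icc 1 (n - 1),
      ℙ {ω | K ω = k} = ENNReal.ofReal
        (2 * ((n : ℝ) + 1) / (((n : ℝ) - 1) * ((k : ℝ) + 2) * ((k : ℝ) + 1))))
    (x y : ℝ) (hx : 0 ≤ x) (hy : 0 ≤ y) :
    ∫ ω, Real.exp (-x * ∑ i ∈ Finset.Icc 1 n, T i ω
        - y * ∑ i ∈ Finset.Icc (K ω + 1) n, T i ω) ∂ℙ
      = 2 * ((n : ℝ) + 1) * (∏ i ∈ Finset.Icc 1 n, (i : ℝ) / (x + y + i)) / ((n : ℝ) - 1)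
        * ∑ k ∈ Finset.Icc 1 (n - 1),
            (∏ i ∈ Finset.Icc 1 k, (i : ℝ) / (x + i))
              / (((k : ℝ) + 2) * ((k : ℝ) + 1) * ∏ i ∈ Finset.Icc 1 k, (i : ℝ) / (x + y + i)) := by
  classical
  set c : ℕ → ℕ → ℝ := fun k i => if i ≤ k then -x else -(x + y) with hc
  have hTae : ∀ i, AEMeasurable (T i) ℙ := fun i => (hTmeas i).aemeasurable
  have hcnonpos : ∀ k i, c k i ≤ 0 := by
    intro k i; dsimp [c]; split <;> linarith
  have hipos : ∀ i ∈ Finset.Icc 1 n, (0:ℝ) < i := by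
    intro i hi
    exact_mod_cast (Finset.mem_Icc.mp hi).1
  -- integrability of each exp factor, under ℙ
  have hint1 : ∀ k, ∀ i ∈ Finset.Icc 1 n,
      Integrable (fun ω => Real.exp (c k i * T i ω)) ℙ := by
    intro k i hi
    have hg : Integrable (fun t => Real.exp (c k i * t)) (Measure.map (T i) ℙ) := by
      rw [hTexp i hi]
      simpa [neg_neg] using
        exp_integrable_expMeasure i (-(c k i)) (hipos i hi) (by linarith [hcnonpos k i])
    exact (integrable_map_measure hg.1 (hTae i)).mp hg
  -- value of each exp factor integral (mgf at 1)
  have hmgf : ∀ k, ∀ i ∈ Finset.Icc 1 n,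
      mgf (fun ω => c k i * T i ω) ℙ 1 = (i:ℝ) / (-(c k i) + i) := by
    intro k i hi
    have hmeasg : AEStronglyMeasurable (fun t => Real.exp (c k i * t)) (Measure.map (T i) ℙ) :=
      (meas_exp_fun (c k i)).aestronglyMeasurable
    have hmap : ∫ ω, Real.exp (c k i * T i ω) ∂ℙ
        = ∫ t, Real.exp (c k i * t) ∂(expMeasure i) := by
      rw [← hTexp i hi]
      exact (integral_map (hTae i) hmeasg).symm
    rw [mgf]
    simp_rw [one_mul]
    rw [hmap]
    simpa [neg_neg] using
      exp_integral_expMeasure i (-(c k i)) (hipos i hi) (by linarith [hcnonpos k i])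
  -- independence of the scaled variables
  have hXind : ∀ k, iIndepFun (fun i ω => c k i * T i ω) ℙ := fun k =>
    hTindep.comp (fun i t => c k i * t) (fun i => measurable_const.mul measurable_id)
  -- expectation of exp of sum
  have hEk : ∀ k, ∫ ω, Real.exp (∑ i ∈ Finset.Icc 1 n, c k i * T i ω) ∂ℙ
      = ∏ i ∈ Finset.Icc 1 n, ((i:ℝ) / (-(c k i) + i)) := by
    intro k
    have h1 : mgf (∑ i ∈ Finset.Icc 1 n, fun ω => c k i * T i ω) ℙ 1
        = ∏ i ∈ Finset.Icc 1 n, mgf (fun ω => c k i * T i ω) ℙ 1 :=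
      (hXind k).mgf_sum (fun i => measurable_const.mul (hTmeas i)) (Finset.Icc 1 n)
    rw [Finset.prod_congr rfl (hmgf k)] at h1
    rw [← h1, mgf]
    simp [Finset.sum_apply]
  have hIntEk : ∀ k, Integrable (fun ω => Real.exp (∑ i ∈ Finset.Icc 1 n, c k i * T i ω)) ℙ := by
    intro k
    have := (hXind k).integrable_exp_mul_sum (t := 1)
      (fun i => measurable_const.mul (hTmeas i)) (s := Finset.Icc 1 n)
      (fun i hi => by simpa using hint1 k i hi)
    simpa [Finset.sum_apply] using this
  -- splitting the exponent
  have hsplit : ∀ k ∈ Finset.Icc 1 (n-1), ∀ ω : Ω,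
      (-x * ∑ i ∈ Finset.Icc 1 n, T i ω - y * ∑ i ∈ Finset.Icc (k+1) n, T i ω)
        = ∑ i ∈ Finset.Icc 1 n, c k i * T i ω := by
    intro k hk ω
    obtain ⟨hk1, hk2⟩ := Finset.mem_Icc.mp hk
    have hkn : k ≤ n := le_trans hk2 (Nat.sub_le n 1)
    have e1 : Finset.Icc 1 n = Finset.Ioc 0 n := by rw [← Finset.Icc_add_one_left_eq_Ioc, zero_add]
    have e2 : Finset.Icc (k+1) n = Finset.Ioc k n := by rw [← Finset.Icc_add_one_left_eq_Ioc]
    rw [e1, e2,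
      ← Finset.sum_Ioc_consecutive (fun i => T i ω) (Nat.zero_le k) hkn,
      ← Finset.sum_Ioc_consecutive (fun i => c k i * T i ω) (Nat.zero_le k) hkn]
    have h4 : ∑ i ∈ Finset.Ioc 0 k, c k i * T i ω = ∑ i ∈ Finset.Ioc 0 k, -x * T i ω :=
      Finset.sum_congr rfl fun i hi => by
        have h : i ≤ k := (Finset.mem_Ioc.mp hi).2
        simp [c, h]
    have h5 : ∑ i ∈ Finset.Ioc k n, c k i * T i ω = ∑ i ∈ Finset.Ioc k n, -(x+y) * T i ω :=
      Finset.sum_congr rfl fun i hi => by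
        have h : ¬ i ≤ k := not_le.mpr (Finset.mem_Ioc.mp hi).1
        simp [c, h]
    rw [h4, h5, ← Finset.mul_sum, ← Finset.mul_sum]
    ring
  -- pointwise decomposition over the value of K
  have hptwise : ∀ ω, Real.exp (-x * ∑ i ∈ Finset.Icc 1 n, T i ω
        - y * ∑ i ∈ Finset.Icc (K ω + 1) n, T i ω)
      = ∑ k ∈ Finset.Icc 1 (n-1), (if K ω = k then (1:ℝ) else 0)
          * Real.exp (∑ i ∈ Finset.Icc 1 n, c k i * T i ω) := by
    intro ω
    have hsum : (∑ k ∈ Finset.Icc 1 (n-1), (if K ω = k then (1:ℝ) else 0)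
          * Real.exp (∑ i ∈ Finset.Icc 1 n, c k i * T i ω))
        = (if K ω = K ω then (1:ℝ) else 0)
          * Real.exp (∑ i ∈ Finset.Icc 1 n, c (K ω) i * T i ω) :=
      Finset.sum_eq_single (K ω)
        (fun b _ hne => by rw [if_neg (fun h => hne h.symm), zero_mul])
        (fun h => absurd (hKrange ω) h)
    rw [hsplit (K ω) (hKrange ω) ω, hsum, if_pos rfl, one_mul]
  have hIkmeas : ∀ k : ℕ, Measurable (fun ω => if K ω = k then (1:ℝ) else 0) := by
    intro k
    have hs : MeasurableSet {ω | K ω = k} := hKmeas (measurableSet_singleton k)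
    exact Measurable.ite hs measurable_const measurable_const
  have hintk : ∀ k ∈ Finset.Icc 1 (n-1), Integrable (fun ω =>
      (if K ω = k then (1:ℝ) else 0) * Real.exp (∑ i ∈ Finset.Icc 1 n, c k i * T i ω)) ℙ := by
    intro k _
    exact (hIntEk k).bdd_mul (hIkmeas k).aestronglyMeasurable
      (c := 1) (ae_of_all _ fun ω => by by_cases h : K ω = k <;> simp [h])
  -- the per-k integral
  have hprodk : ∀ k ∈ Finset.Icc 1 (n-1),
      ∫ ω, (if K ω = k then (1:ℝ) else 0)
          * Real.exp (∑ i ∈ Finset.Icc 1 n, c k i * T i ω) ∂ℙ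
        = (2 * ((n:ℝ)+1) / (((n:ℝ)-1) * ((k:ℝ)+2) * ((k:ℝ)+1)))
          * ∏ i ∈ Finset.Icc 1 n, ((i:ℝ) / (-(c k i) + i)) := by
    intro k hk
    set φ : (Fin n → ℝ) → ℝ := fun v => Real.exp (∑ j : Fin n, c k ((j:ℕ)+1) * v j) with hφ
    set ψ : ℕ → ℝ := fun m => if m = k then 1 else 0 with hψ
    have hφm : Measurable φ :=
      (Finset.measurable_sum Finset.univ fun j _ =>
        (measurable_pi_apply j).const_mul _).exp
    have hψm : Measurable ψ := measurable_from_top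
    have hsum_fin : ∀ ω, ∑ j : Fin n, c k ((j:ℕ)+1) * T ((j:ℕ)+1) ω
        = ∑ i ∈ Finset.Icc 1 n, c k i * T i ω := by
      intro ω
      rw [Fin.sum_univ_eq_sum_range (fun j => c k (j+1) * T (j+1) ω) n]
      rw [show Finset.Icc 1 n = Finset.Ico 1 (n+1) by rw [Finset.Ico_add_one_right_eq_Icc],
        Finset.sum_Ico_eq_sum_range]
      simp [Nat.add_comm]
    have hφV : ∀ ω, φ (fun i : Fin n => T ((i:ℕ)+1) ω)
        = Real.exp (∑ i ∈ Finset.Icc 1 n, c k i * T i ω) := by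
      intro ω; rw [hφ]; exact congrArg Real.exp (hsum_fin ω)
    have hindep2 : IndepFun (φ ∘ (fun ω (i : Fin n) => T ((i:ℕ)+1) ω)) (ψ ∘ K) ℙ :=
      hKindep.comp hφm hψm
    have hIφ : Integrable (φ ∘ (fun ω (i : Fin n) => T ((i:ℕ)+1) ω)) ℙ := by
      have := hIntEk k
      refine this.congr (ae_of_all _ fun ω => (hφV ω).symm)
    have hsmeas : MeasurableSet {ω | K ω = k} := hKmeas (measurableSet_singleton k)
    have hIψ : Integrable (ψ ∘ K) ℙ := by
      have : (ψ ∘ K) = Set.indicator {ω | K ω = k} (1 : Ω → ℝ) := by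
        ext ω; simp [ψ, Set.indicator_apply, Set.mem_setOf_eq]
      rw [this]
      exact (integrable_const 1).indicator hsmeas
    have key := hindep2.integral_mul_eq_mul_integral hIφ.aestronglyMeasurable hIψ.aestronglyMeasurable
    have hEψ : ∫ ω, ψ (K ω) ∂ℙ
        = 2 * ((n:ℝ)+1) / (((n:ℝ)-1) * ((k:ℝ)+2) * ((k:ℝ)+1)) := by
      have h1 : (fun ω => ψ (K ω)) = Set.indicator {ω | K ω = k} (1 : Ω → ℝ) := by
        ext ω; simp [ψ, Set.indicator_apply, Set.mem_setOf_eq]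
      have hnn : (0:ℝ) ≤ 2 * ((n:ℝ)+1) / (((n:ℝ)-1) * ((k:ℝ)+2) * ((k:ℝ)+1)) := by
        have : (1:ℝ) ≤ (n:ℝ) := by exact_mod_cast Nat.one_le_of_lt hn
        have h2 : (0:ℝ) < (n:ℝ) - 1 := by
          have : (2:ℝ) ≤ (n:ℝ) := by exact_mod_cast hn
          linarith
        positivity
      rw [h1, integral_indicator_one hsmeas, Measure.real, hKdist k hk, ENNReal.toReal_ofReal hnn]
    calc ∫ ω, (if K ω = k then (1:ℝ) else 0)
          * Real.exp (∑ i ∈ Finset.Icc 1 n, c k i * T i ω) ∂ℙ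
        = ∫ ω, ((φ ∘ (fun ω (i : Fin n) => T ((i:ℕ)+1) ω)) * (ψ ∘ K)) ω ∂ℙ := by
          refine integral_congr_ae (ae_of_all _ fun ω => ?_)
          simp only [Pi.mul_apply, Function.comp_apply, hφV ω, hψ]
          ring
      _ = (∫ ω, (φ ∘ (fun ω (i : Fin n) => T ((i:ℕ)+1) ω)) ω ∂ℙ) * ∫ ω, ψ (K ω) ∂ℙ := key
      _ = (∏ i ∈ Finset.Icc 1 n, ((i:ℝ) / (-(c k i) + i)))
            * (2 * ((n:ℝ)+1) / (((n:ℝ)-1) * ((k:ℝ)+2) * ((k:ℝ)+1))) := by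
          rw [hEψ]
          congr 1
          rw [show (fun ω => (φ ∘ (fun ω (i : Fin n) => T ((i:ℕ)+1) ω)) ω)
            = fun ω => Real.exp (∑ i ∈ Finset.Icc 1 n, c k i * T i ω) from funext hφV]
          exact hEk k
      _ = _ := by ring
  -- assemble
  rw [integral_congr_ae (ae_of_all _ hptwise), integral_finset_sum _ hintk,
    Finset.sum_congr rfl hprodk, Finset.mul_sum]
  refine Finset.sum_congr rfl fun k hk => ?_
  obtain ⟨hk1, hk2⟩ := Finset.mem_Icc.mp hk
  have hkn : k ≤ n := le_trans hk2 (Nat.sub_le n 1)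
  -- split the products
  have e1 : Finset.Icc 1 n = Finset.Ioc 0 n := by rw [← Finset.Icc_add_one_left_eq_Ioc, zero_add]
  have e3 : Finset.Icc 1 k = Finset.Ioc 0 k := by rw [← Finset.Icc_add_one_left_eq_Ioc, zero_add]
  have hsplitc : ∏ i ∈ Finset.Icc 1 n, ((i:ℝ) / (-(c k i) + i))
      = (∏ i ∈ Finset.Icc 1 k, ((i:ℝ) / (x + i)))
        * ∏ i ∈ Finset.Ioc k n, ((i:ℝ) / (x + y + i)) := by
    rw [e1, e3, ← Finset.prod_Ioc_consecutive (fun i => ((i:ℝ) / (-(c k i) + i)))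
      (Nat.zero_le k) hkn]
    congr 1
    · refine Finset.prod_congr rfl fun i hi => ?_
      have h : i ≤ k := (Finset.mem_Ioc.mp hi).2
      simp [c, h]
    · refine Finset.prod_congr rfl fun i hi => ?_
      have h : ¬ i ≤ k := not_le.mpr (Finset.mem_Ioc.mp hi).1
      simp [c, h]
  have hsplitxy : ∏ i ∈ Finset.Icc 1 n, ((i:ℝ) / (x + y + i))
      = (∏ i ∈ Finset.Icc 1 k, ((i:ℝ) / (x + y + i)))
        * ∏ i ∈ Finset.Ioc k n, ((i:ℝ) / (x + y + i)) := by
    rw [e1, e3, ← Finset.prod_Ioc_consecutive (fun i => ((i:ℝ) / (x + y + i)))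
      (Nat.zero_le k) hkn]
  have hbne : (∏ i ∈ Finset.Icc 1 k, ((i:ℝ) / (x + y + i))) ≠ 0 := by
    refine ne_of_gt (Finset.prod_pos fun i hi => ?_)
    have h1 : (0:ℝ) < i := by exact_mod_cast (Finset.mem_Icc.mp hi).1
    have h2 : (0:ℝ) < x + y + i := by linarith
    positivity
  have hn1 : ((n:ℝ) - 1) ≠ 0 := by
    have : (2:ℝ) ≤ (n:ℝ) := by exact_mod_cast hn
    intro h; linarith [h]
  have hk2' : ((k:ℝ) + 2) ≠ 0 := by positivity
  have hk1' : ((k:ℝ) + 1) ≠ 0 := by positivity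
  rw [hsplitc, hsplitxy]
  set A := ∏ i ∈ Finset.Icc 1 k, ((i:ℝ) / (x + i)) with hA
  set B := ∏ i ∈ Finset.Icc 1 k, ((i:ℝ) / (x + y + i)) with hB
  set Q := ∏ i ∈ Finset.Ioc k n, ((i:ℝ) / (x + y + i)) with hQ
  field_simp
end

section
/- Fix an integer n ≥ 2. Let T_1, …, T_n be independent random variables with T_i exponentially distributed with rate i, and let K be a random variable with values in {1, …, n−1}, independent of (T_1, …, T_n), with P(K = k) = 2(n+1)/((n−1)(k+2)(k+1)). Set τ^{(n)} = T_{K+1} + … + T_n. Then for every real y > −1 with y ≠ 1, E[exp(−y·τ^{(n)})] = (2 − (n+1)(y+1)·b_{n,y}) / ((n−1)(y−1)). -/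
open MeasureTheory ProbabilityTheory


section Helpers
open MeasureTheory ProbabilityTheory Real Set
open scoped ENNReal NNReal

lemma ePDFReal_eq (r x : ℝ) :
    exponentialPDFReal r x = if 0 ≤ x then r * Real.exp (-(r * x)) else 0 := by
  rw [exponentialPDFReal, gammaPDFReal]
  split_ifs <;> simp [Real.rpow_one, Real.Gamma_one]

lemma expMeasure_eq (r : ℝ) :
    expMeasure r = volume.withDensity (fun x => ((exponentialPDFReal r x).toNNReal : ℝ≥0∞)) := by
  rfl

lemma exp_integrand_eq (r y : ℝ) (hr : 0 < r) :
    (fun x => (exponentialPDFReal r x).toNNReal • Real.exp (-y * x))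
      = (Ici (0:ℝ)).indicator (fun x => r * Real.exp (-(y + r) * x)) := by
  funext x
  rw [Set.indicator_apply]
  simp only [NNReal.smul_def, Real.coe_toNNReal', ePDFReal_eq, mem_Ici]
  split_ifs with h
  · rw [max_eq_left (by positivity), smul_eq_mul, mul_assoc, ← Real.exp_add]; ring_nf
  · simp

lemma exp_integrable (r y : ℝ) (hr : 0 < r) (hy : -r < y) :
    Integrable (fun x => Real.exp (-y * x)) (expMeasure r) := by
  rw [expMeasure_eq, integrable_withDensity_iff_integrable_smul
    (by measurability : Measurable fun x => (exponentialPDFReal r x).toNNReal)]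
  rw [exp_integrand_eq r y hr]
  rw [integrable_indicator_iff measurableSet_Ici]
  rw [IntegrableOn, Measure.restrict_congr_set Ioi_ae_eq_Ici.symm]
  exact ((exp_neg_integrableOn_Ioi 0 (by linarith : 0 < y + r)).const_mul r)

lemma exp_laplace (r y : ℝ) (hr : 0 < r) (hy : -r < y) :
    ∫ x, Real.exp (-y * x) ∂(expMeasure r) = r / (y + r) := by
  have hyr : 0 < y + r := by linarith
  rw [expMeasure_eq, integral_withDensity_eq_integral_smul
    (by measurability : Measurable fun x => (exponentialPDFReal r x).toNNReal)]
  rw [exp_integrand_eq r y hr, integral_indicator measurableSet_Ici,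
    integral_Ici_eq_integral_Ioi, MeasureTheory.integral_const_mul]
  have : ∀ x : ℝ, Real.exp (-(y + r) * x) = Real.exp (-((y+r) * x)) := by intro x; ring_nf
  simp_rw [this]
  have := integral_comp_mul_left_Ioi (fun u => Real.exp (-u)) 0 hyr
  simp only [mul_zero] at this
  rw [this, integral_exp_neg_Ioi, neg_zero, Real.exp_zero, smul_eq_mul, mul_one]
  field_simp

end Helpers

section SumLemma
open Finset
set_option maxHeartbeats 1000000 in

lemma sumD (y : ℝ) (hy : -1 < y) (hy1 : y ≠ 1) :
    ∀ m : ℕ, 1 ≤ m →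
      ∑ k ∈ Icc 1 m, 2 * ((m : ℝ) + 2) / ((m : ℝ) * ((k : ℝ) + 2) * ((k : ℝ) + 1))
          * ∏ i ∈ Icc (k + 1) (m + 1), (i : ℝ) / (y + i)
        = (2 - ((m : ℝ) + 2) * (y + 1) * ∏ i ∈ Icc 1 (m + 1), (i : ℝ) / (y + i))
            / ((m : ℝ) * (y - 1)) := by
  have hy1' : y - 1 ≠ 0 := sub_ne_zero.mpr hy1
  have hpos : ∀ j : ℕ, (0:ℝ) < y + (j+1) := by
    intro j; have : (0:ℝ) ≤ (j:ℝ) := Nat.cast_nonneg j; push_cast; linarith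
  intro m hm
  induction m, hm using Nat.le_induction with
  | base =>
    rw [show (1:ℕ) + 1 = 2 from rfl, Icc_self, sum_singleton,
      show Icc (1+1) 2 = {2} from rfl, show Icc 1 2 = {1,2} from rfl]
    rw [prod_singleton, prod_insert (by decide), prod_singleton]
    have h1 : (0:ℝ) < y + 1 := by linarith
    have h2 : (0:ℝ) < y + 2 := by linarith
    push_cast
    field_simp
    ring
  | succ m hm ih =>
    have ih' := ih
    have hm0 : (0:ℝ) < (m:ℝ) := by exact_mod_cast hm
    have h2 : (0:ℝ) < y + ((m:ℝ) + 2) := by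
      have := hpos (m+1); push_cast at this ⊢; linarith
    -- split off top term k = m+1
    rw [sum_Icc_succ_top (by omega : 1 ≤ m + 1)]
    push_cast
    -- rewrite the remaining sum
    have hsum : ∑ k ∈ Icc 1 m,
        2 * ((m:ℝ) + 1 + 2) / (((m:ℝ)+1) * ((k:ℝ) + 2) * ((k:ℝ) + 1))
          * ∏ i ∈ Icc (k + 1) (m + 1 + 1), (i : ℝ) / (y + i)
        = ((m:ℝ) * ((m:ℝ)+3) * ((m:ℝ)+2) / (((m:ℝ)+1) * ((m:ℝ)+2) * (y + ((m:ℝ)+2))))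
          * ∑ k ∈ Icc 1 m, 2 * ((m : ℝ) + 2) / ((m : ℝ) * ((k : ℝ) + 2) * ((k : ℝ) + 1))
              * ∏ i ∈ Icc (k + 1) (m + 1), (i : ℝ) / (y + i) := by
      rw [mul_sum]
      refine sum_congr rfl fun k hk => ?_
      have hk' := mem_Icc.mp hk
      rw [prod_Icc_succ_top (by omega : k + 1 ≤ m + 1 + 1)]
      have hk1 : ((k:ℝ) + 1) ≠ 0 := by positivity
      have hk2 : ((k:ℝ) + 2) ≠ 0 := by positivity
      have hm1 : ((m:ℝ) + 1) ≠ 0 := by positivity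
      have hm2 : ((m:ℝ) + 2) ≠ 0 := by positivity
      have hm3 : (m:ℝ) ≠ 0 := ne_of_gt hm0
      have hym : (y + ((m:ℝ)+2)) ≠ 0 := ne_of_gt h2
      have hym' : y + ((m:ℝ)+1+1) ≠ 0 := by
        have : y + ((m:ℝ)+1+1) = y + ((m:ℝ)+2) := by ring
        rw [this]; exact hym
      generalize (∏ i ∈ Icc (k + 1) (m + 1), (i : ℝ) / (y + i)) = P
      push_cast
      field_simp
      ring
    rw [hsum, ih']
    rw [prod_Icc_succ_top (by omega : 1 ≤ m + 1 + 1),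
      show Icc (m+1+1) (m+1+1) = {m+2} from by rw [Icc_self],
      prod_singleton]
    have hm1 : ((m:ℝ) + 1) ≠ 0 := by positivity
    have hm2 : ((m:ℝ) + 2) ≠ 0 := by positivity
    have hm3' : ((m:ℝ) + 3) ≠ 0 := by positivity
    have hm3 : (m:ℝ) ≠ 0 := ne_of_gt hm0
    have hym : (y + ((m:ℝ)+2)) ≠ 0 := ne_of_gt h2
    have hym' : y + ((m:ℝ)+1+1) ≠ 0 := by
      have : y + ((m:ℝ)+1+1) = y + ((m:ℝ)+2) := by ring
      rw [this]; exact hym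
    generalize (∏ i ∈ Icc 1 (m + 1), (i : ℝ) / (y + i)) = B
    push_cast
    field_simp
    ring

end SumLemma

open MeasureTheory ProbabilityTheory

set_option maxHeartbeats 1000000 in
/-- Laplace transform of the time `τ⁽ⁿ⁾ = T_{K+1} + … + T_n` to the most recent
common ancestor of two randomly sampled tips of the Yule `n`-tree: for
`y > -1`, `y ≠ 1`,
`E[e^{−y·τ⁽ⁿ⁾}] = (2 − (n+1)(y+1) b_{n,y}) / ((n−1)(y−1))`,
where `b_{n,y} = ∏_{i=1}^n i/(y+i)`. -/
theorem statement6 {Ω : Type*} [MeasureSpace Ω] [IsProbabilityMeasure (ℙ : Measure Ω)]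
    (n : ℕ) (hn : 2 ≤ n) (T : ℕ → Ω → ℝ) (K : Ω → ℕ)
    (hTmeas : ∀ i, Measurable (T i))
    (hTindep : iIndepFun T ℙ)
    (hTexp : ∀ i ∈ Finset.Icc 1 n, Measure.map (T i) ℙ = expMeasure i)
    (hKmeas : Measurable K)
    (hKrange : ∀ ω, K ω ∈ Finset.Icc 1 (n - 1))
    (hKindep : IndepFun (fun ω (i : Fin n) => T (i + 1) ω) K ℙ)
    (hKdist : ∀ k ∈ Finset.Icc 1 (n - 1),
      ℙ {ω | K ω = k} = ENNReal.ofReal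
        (2 * ((n : ℝ) + 1) / (((n : ℝ) - 1) * ((k : ℝ) + 2) * ((k : ℝ) + 1))))
    (y : ℝ) (hy : -1 < y) (hy1 : y ≠ 1) :
    ∫ ω, Real.exp (-y * ∑ i ∈ Finset.Icc (K ω + 1) n, T i ω) ∂ℙ
      = (2 - ((n : ℝ) + 1) * (y + 1) * ∏ i ∈ Finset.Icc 1 n, (i : ℝ) / (y + i))
          / (((n : ℝ) - 1) * (y - 1)) := by
  classical
  have hn' : (2:ℝ) ≤ (n:ℝ) := by exact_mod_cast hn
  set Tv : Ω → Fin n → ℝ := fun ω (i : Fin n) => T (i + 1) ω with hTv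
  set g : ℕ → Ω → ℝ := fun i ω => Real.exp (-y * T i ω) with hgdef
  have hgmeas : ∀ i : ℕ, Measurable (g i) :=
    fun i => Real.measurable_exp.comp ((hTmeas i).const_mul (-y))
  have hgindep : iIndepFun g ℙ :=
    hTindep.comp (fun _ x => Real.exp (-y * x))
      (fun _ => Real.measurable_exp.comp (measurable_id.const_mul (-y)))
  have hyi : ∀ i : ℕ, 1 ≤ i → -(i:ℝ) < y := by
    intro i hi
    have : (1:ℝ) ≤ (i:ℝ) := by exact_mod_cast hi
    linarith
  have hipos : ∀ i : ℕ, 1 ≤ i → (0:ℝ) < (i:ℝ) := by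
    intro i hi
    have : (1:ℝ) ≤ (i:ℝ) := by exact_mod_cast hi
    linarith
  have hval : ∀ i ∈ Finset.Icc 1 n, ∫ ω, g i ω ∂ℙ = (i:ℝ)/(y+(i:ℝ)) := by
    intro i hi
    have hi1 : 1 ≤ i := (Finset.mem_Icc.mp hi).1
    have hme : Measurable fun x : ℝ => Real.exp (-y * x) := by fun_prop
    have : ∫ ω, g i ω ∂ℙ = ∫ x, Real.exp (-y * x) ∂(Measure.map (T i) ℙ) := by
      rw [integral_map (hTmeas i).aemeasurable hme.aestronglyMeasurable]
    rw [this, hTexp i hi, exp_laplace _ _ (hipos i hi1) (hyi i hi1)]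
  have hint : ∀ i ∈ Finset.Icc 1 n, Integrable (g i) ℙ := by
    intro i hi
    have hi1 : 1 ≤ i := (Finset.mem_Icc.mp hi).1
    have h1 := exp_integrable (i:ℝ) y (hipos i hi1) (hyi i hi1)
    rw [← hTexp i hi] at h1
    exact h1.comp_aemeasurable (hTmeas i).aemeasurable
  have hprod : ∀ s : Finset ℕ, s ⊆ Finset.Icc 1 n →
      Integrable (∏ j ∈ s, g j) ℙ ∧
        ∫ ω, (∏ j ∈ s, g j) ω ∂ℙ = ∏ i ∈ s, (i:ℝ)/(y+(i:ℝ)) := by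
    intro s
    induction s using Finset.induction_on with
    | empty =>
      intro _
      refine ⟨by rw [Finset.prod_empty]; exact integrable_const (1:ℝ), ?_⟩
      simp
    | @insert a s ha ih =>
      intro hsub
      have hsub' : s ⊆ Finset.Icc 1 n := (Finset.subset_insert a s).trans hsub
      have hmema : a ∈ Finset.Icc 1 n := hsub (Finset.mem_insert_self a s)
      obtain ⟨ih1, ih2⟩ := ih hsub'
      have hind : IndepFun (∏ j ∈ s, g j) (g a) ℙ :=
        hgindep.indepFun_finset_prod_of_notMem hgmeas ha
      have hprodins : (∏ j ∈ insert a s, g j) = (∏ j ∈ s, g j) * g a := by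
        rw [Finset.prod_insert ha, mul_comm]
      refine ⟨by rw [hprodins]; exact hind.integrable_mul ih1 (hint a hmema), ?_⟩
      rw [hprodins, hind.integral_mul_eq_mul_integral ih1.aestronglyMeasurable (hint a hmema).aestronglyMeasurable, ih2,
        hval a hmema, Finset.prod_insert ha, mul_comm]
  have hsubset : ∀ k : ℕ, Finset.Icc (k+1) n ⊆ Finset.Icc 1 n := by
    intro k i hi
    have := Finset.mem_Icc.mp hi
    exact Finset.mem_Icc.mpr ⟨by omega, this.2⟩
  have hAeq : ∀ k : ℕ, (fun ω => Real.exp (-y * ∑ i ∈ Finset.Icc (k+1) n, T i ω))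
      = ∏ j ∈ Finset.Icc (k+1) n, g j := by
    intro k
    funext ω
    rw [Finset.prod_apply, Finset.mul_sum, Real.exp_sum]
  set φ : ℕ → (Fin n → ℝ) → ℝ := fun k v =>
    ∏ i ∈ Finset.Icc (k+1) n, Real.exp (-y * (if h : i - 1 < n then v ⟨i-1, h⟩ else 0))
    with hφdef
  have hφmeas : ∀ k, Measurable (φ k) := by
    intro k
    apply Finset.measurable_prod
    intro i _
    apply Real.measurable_exp.comp
    apply Measurable.const_mul
    by_cases h : i - 1 < n
    · simp only [dif_pos h]; exact measurable_pi_apply _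
    · simp only [dif_neg h]; exact measurable_const
  have hφT : ∀ k, (fun ω => φ k (Tv ω)) = ∏ j ∈ Finset.Icc (k+1) n, g j := by
    intro k
    funext ω
    rw [Finset.prod_apply, hφdef]
    refine Finset.prod_congr rfl fun i hi => ?_
    have hmem := Finset.mem_Icc.mp hi
    have h1 : i - 1 < n := by omega
    rw [dif_pos h1]
    have h2 : i - 1 + 1 = i := by omega
    simp only [hTv, hgdef, h2]
  set ψ : ℕ → ℕ → ℝ := fun k m => if m = k then 1 else 0 with hψdef
  have hψmeas : ∀ k, Measurable (ψ k) := fun k => measurable_from_top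
  have hdecomp : ∀ ω, Real.exp (-y * ∑ i ∈ Finset.Icc (K ω + 1) n, T i ω)
      = ∑ k ∈ Finset.Icc 1 (n-1), ψ k (K ω) * φ k (Tv ω) := by
    intro ω
    rw [Finset.sum_eq_single_of_mem (K ω) (hKrange ω)]
    · rw [congrFun (hφT (K ω)) ω, ← congrFun (hAeq (K ω)) ω]
      simp [hψdef]
    · intro b _ hb
      rw [hψdef]
      simp only [if_neg (Ne.symm hb), zero_mul]
  have hintk : ∀ k, Integrable (fun ω => ψ k (K ω) * φ k (Tv ω)) ℙ := by
    intro k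
    have h1 : Integrable (fun ω => φ k (Tv ω)) ℙ := by
      rw [hφT k]; exact (hprod _ (hsubset k)).1
    apply h1.bdd_mul (c := 1) ((hψmeas k).comp hKmeas).aestronglyMeasurable
    refine Filter.Eventually.of_forall fun ω => ?_
    rw [hψdef]
    by_cases h : K ω = k <;> simp [h]
  have hPk : ∀ k ∈ Finset.Icc 1 (n-1),
      ∫ ω, ψ k (K ω) ∂ℙ
        = 2 * ((n : ℝ) + 1) / (((n : ℝ) - 1) * ((k : ℝ) + 2) * ((k : ℝ) + 1)) := by
    intro k hk
    have hindic : (fun ω => ψ k (K ω)) = Set.indicator {ω | K ω = k} (fun _ => (1:ℝ)) := by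
      funext ω
      rw [Set.indicator_apply, hψdef]
      simp [Set.mem_setOf_eq]
    rw [hindic,
      show integral ℙ ({ω | K ω = k}.indicator fun _ => (1:ℝ))
          = (ℙ {ω | K ω = k}).toReal • (1:ℝ) from
        integral_indicator_const (1:ℝ) (hKmeas (measurableSet_singleton k)),
      hKdist k hk, smul_eq_mul, mul_one, ENNReal.toReal_ofReal]
    apply div_nonneg (by positivity)
    have h1 : (0:ℝ) ≤ (n:ℝ) - 1 := by linarith
    have h2 : (0:ℝ) ≤ (k:ℝ) + 2 := by positivity
    have h3 : (0:ℝ) ≤ (k:ℝ) + 1 := by positivity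
    exact mul_nonneg (mul_nonneg h1 h2) h3
  have hterm : ∀ k ∈ Finset.Icc 1 (n-1),
      ∫ ω, ψ k (K ω) * φ k (Tv ω) ∂ℙ
        = 2 * ((n : ℝ) + 1) / (((n : ℝ) - 1) * ((k : ℝ) + 2) * ((k : ℝ) + 1))
            * ∏ i ∈ Finset.Icc (k+1) n, (i:ℝ)/(y+(i:ℝ)) := by
    intro k hk
    have hIF : IndepFun (φ k ∘ Tv) (ψ k ∘ K) ℙ := hKindep.comp (hφmeas k) (hψmeas k)
    have hX : Integrable (φ k ∘ Tv) ℙ := by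
      have h1 : Integrable (fun ω => φ k (Tv ω)) ℙ := by
        rw [hφT k]; exact (hprod _ (hsubset k)).1
      exact h1
    have hY : Integrable (ψ k ∘ K) ℙ := by
      have hindic : (ψ k ∘ K) = Set.indicator {ω | K ω = k} (fun _ => (1:ℝ)) := by
        funext ω
        rw [Function.comp_apply, Set.indicator_apply, hψdef]
        simp [Set.mem_setOf_eq]
      rw [hindic]
      exact (integrable_const 1).indicator (hKmeas (measurableSet_singleton k))
    have hmul := hIF.integral_mul_eq_mul_integral hX.aestronglyMeasurable hY.aestronglyMeasurable
    have hφint : ∫ ω, φ k (Tv ω) ∂ℙ = ∏ i ∈ Finset.Icc (k+1) n, (i:ℝ)/(y+(i:ℝ)) := by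
      have h2 := (hprod _ (hsubset k)).2
      calc ∫ ω, φ k (Tv ω) ∂ℙ = ∫ ω, (∏ j ∈ Finset.Icc (k+1) n, g j) ω ∂ℙ := by
            rw [← hφT k]
        _ = _ := h2
    have e1 : integral ℙ (φ k ∘ Tv) = ∏ i ∈ Finset.Icc (k+1) n, (i:ℝ)/(y+(i:ℝ)) := hφint
    have e2 : integral ℙ (ψ k ∘ K)
        = 2 * ((n : ℝ) + 1) / (((n : ℝ) - 1) * ((k : ℝ) + 2) * ((k : ℝ) + 1)) := hPk k hk
    calc ∫ ω, ψ k (K ω) * φ k (Tv ω) ∂ℙ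
        = integral ℙ (φ k ∘ Tv * ψ k ∘ K) :=
          integral_congr_ae (Filter.Eventually.of_forall fun ω => mul_comm _ _)
      _ = integral ℙ (φ k ∘ Tv) * integral ℙ (ψ k ∘ K) := hmul
      _ = _ := by rw [e1, e2, mul_comm]
  -- put everything together
  rw [show (fun ω => Real.exp (-y * ∑ i ∈ Finset.Icc (K ω + 1) n, T i ω))
      = fun ω => ∑ k ∈ Finset.Icc 1 (n-1), ψ k (K ω) * φ k (Tv ω) from funext hdecomp]
  rw [integral_finset_sum _ (fun k _ => hintk k)]
  rw [Finset.sum_congr rfl hterm]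
  obtain ⟨m, hm1, hnm⟩ : ∃ m, 1 ≤ m ∧ n = m + 1 := ⟨n - 1, by omega, by omega⟩
  subst hnm
  simp only [Nat.add_sub_cancel]
  calc ∑ k ∈ Finset.Icc 1 m,
        2 * ((↑(m+1) : ℝ) + 1) / (((↑(m+1) : ℝ) - 1) * ((k : ℝ) + 2) * ((k : ℝ) + 1))
          * ∏ i ∈ Finset.Icc (k+1) (m+1), (i:ℝ)/(y+(i:ℝ))
      = ∑ k ∈ Finset.Icc 1 m,
          2 * ((m : ℝ) + 2) / ((m : ℝ) * ((k : ℝ) + 2) * ((k : ℝ) + 1))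
            * ∏ i ∈ Finset.Icc (k + 1) (m + 1), (i : ℝ) / (y + i) := by
        refine Finset.sum_congr rfl fun k _ => ?_
        push_cast
        ring
    _ = (2 - ((m : ℝ) + 2) * (y + 1) * ∏ i ∈ Finset.Icc 1 (m + 1), (i : ℝ) / (y + i))
          / ((m : ℝ) * (y - 1)) := sumD y hy hy1 m hm1
    _ = (2 - ((↑(m+1) : ℝ) + 1) * (y + 1) * ∏ i ∈ Finset.Icc 1 (m+1), (i : ℝ) / (y + i))
          / (((↑(m+1) : ℝ) - 1) * (y - 1)) := by
        push_cast
        ring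
end

section
/- Fix an integer n ≥ 2. Let T_1, …, T_n be independent random variables with T_i exponentially distributed with rate i, and let K be a random variable with values in {1, …, n−1}, independent of (T_1, …, T_n), with P(K = k) = 2(n+1)/((n−1)(k+2)(k+1)). Set τ^{(n)} = T_{K+1} + … + T_n. Then E[exp(−τ^{(n)})] = (2/(n−1))·(h_n − 1) − 1/(n+1), where h_n = ∑_{i=1}^n 1/i. -/
open MeasureTheory ProbabilityTheory
set_option maxHeartbeats 1000000

lemma aux_exp_integral {r : ℝ} (hr : 0 < r) :
    ∫ x, Real.exp (-x) ∂(expMeasure r) = r / (r + 1) := by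
  have hmeas : Measurable fun x : ℝ => Real.exp (-x) := measurable_id.neg.exp
  have hpdf : ∀ s : ℝ, 0 < s → ∀ x : ℝ, gammaPDF 1 s x
      = ENNReal.ofReal (if 0 ≤ x then s * Real.exp (-(s*x)) else 0) := by
    intro s hs x
    rw [gammaPDF_eq]
    congr 1
    split_ifs with h
    · simp [Real.Gamma_one]
    · rfl
  have key : ∀ x : ℝ, gammaPDF 1 r x * ENNReal.ofReal (Real.exp (-x))
      = ENNReal.ofReal (r / (r+1)) * gammaPDF 1 (r+1) x := by
    intro x
    rw [hpdf r hr x, hpdf (r+1) (by linarith) x]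
    split_ifs with h
    · rw [← ENNReal.ofReal_mul (by positivity), ← ENNReal.ofReal_mul (by positivity)]
      congr 1
      have h1 : Real.exp (-(r*x)) * Real.exp (-x) = Real.exp (-((r+1)*x)) := by
        rw [← Real.exp_add]; ring_nf
      rw [mul_assoc, h1, ← mul_assoc, div_mul_cancel₀ _ (by positivity : (r:ℝ)+1 ≠ 0)]
    · simp
  rw [integral_eq_lintegral_of_nonneg_ae (ae_of_all _ fun x => (Real.exp_pos _).le)
      hmeas.aestronglyMeasurable]
  have : ∫⁻ x, ENNReal.ofReal (Real.exp (-x)) ∂(expMeasure r)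
      = ENNReal.ofReal (r / (r+1)) := by
    have hg : ∀ s : ℝ, Measurable (gammaPDF 1 s) := fun s =>
      (measurable_gammaPDFReal 1 s).ennreal_ofReal
    rw [expMeasure, gammaMeasure,
      lintegral_withDensity_eq_lintegral_mul _ (hg r) hmeas.ennreal_ofReal]
    calc ∫⁻ x, (gammaPDF 1 r * fun x => ENNReal.ofReal (Real.exp (-x))) x
        = ∫⁻ x, ENNReal.ofReal (r / (r+1)) * gammaPDF 1 (r+1) x := by
          simp only [Pi.mul_apply]; exact lintegral_congr key
      _ = ENNReal.ofReal (r / (r+1)) := by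
          rw [lintegral_const_mul _ (hg (r+1)),
            lintegral_gammaPDF_eq_one zero_lt_one (by linarith), mul_one]
  rw [this, ENNReal.toReal_ofReal (by positivity)]
open MeasureTheory ProbabilityTheory

lemma aux_telescope (k : ℕ) : ∀ n : ℕ, k ≤ n →
    ∏ i ∈ Finset.Icc (k+1) n, ((i:ℝ) / ((i:ℝ)+1)) = ((k:ℝ)+1) / ((n:ℝ)+1) := by
  intro n
  induction n with
  | zero => intro h; interval_cases k; simp
  | succ m ih =>
    intro h
    rcases Nat.eq_or_lt_of_le h with h1 | h1
    · subst h1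
      rw [Finset.Icc_eq_empty (by omega), Finset.prod_empty,
        div_self (by positivity)]
    · have hk : k ≤ m := by omega
      rw [Finset.prod_Icc_succ_top (by omega), ih hk]
      have h2 : ((m:ℝ)+1) ≠ 0 := by positivity
      push_cast
      field_simp

lemma aux_harm : ∀ n : ℕ, 2 ≤ n →
    ∑ k ∈ Finset.Icc 1 (n-1), (1:ℝ)/((k:ℝ)+2)
      = (∑ i ∈ Finset.Icc 1 n, (1:ℝ)/(i:ℝ)) - 3/2 + 1/((n:ℝ)+1) := by
  intro n
  induction n with
  | zero => omega
  | succ m ih =>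
    intro h
    rcases Nat.lt_or_ge m 2 with h1 | h1
    · have hm : m = 1 := by omega
      subst hm
      norm_num [show Finset.Icc 1 (2-1) = {1} by decide,
        show Finset.Icc 1 2 = {1,2} by decide]
    · have e1 : m + 1 - 1 = (m-1) + 1 := by omega
      rw [e1, Finset.sum_Icc_succ_top (by omega), ih h1,
        Finset.sum_Icc_succ_top (show 1 ≤ m + 1 by omega)]
      have e3 : m - 1 + 1 = m := by omega
      rw [e3]
      have h2 : ((m:ℝ)+1) ≠ 0 := by positivity
      have h3 : ((m:ℝ)+2) ≠ 0 := by positivity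
      push_cast
      field_simp
      ring

/-- At `y = 1`, the Laplace transform of `τ⁽ⁿ⁾ = T_{K+1} + … + T_n` equals
`E[e^{−τ⁽ⁿ⁾}] = (2/(n−1))(h_n − 1) − 1/(n+1)`, where `h_n = ∑_{i=1}^n 1/i`. -/
theorem statement7 {Ω : Type*} [MeasureSpace Ω] [IsProbabilityMeasure (ℙ : Measure Ω)]
    (n : ℕ) (hn : 2 ≤ n) (T : ℕ → Ω → ℝ) (K : Ω → ℕ)
    (hTmeas : ∀ i, Measurable (T i))
    (hTindep : iIndepFun T ℙ)
    (hTexp : ∀ i ∈ Finset.Icc 1 n, Measure.map (T i) ℙ = expMeasure i)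
    (hKmeas : Measurable K)
    (hKrange : ∀ ω, K ω ∈ Finset.Icc 1 (n - 1))
    (hKindep : IndepFun (fun ω (i : Fin n) => T (i + 1) ω) K ℙ)
    (hKdist : ∀ k ∈ Finset.Icc 1 (n - 1),
      ℙ {ω | K ω = k} = ENNReal.ofReal
        (2 * ((n : ℝ) + 1) / (((n : ℝ) - 1) * ((k : ℝ) + 2) * ((k : ℝ) + 1)))) :
    ∫ ω, Real.exp (-∑ i ∈ Finset.Icc (K ω + 1) n, T i ω) ∂ℙ
      = 2 / ((n : ℝ) - 1) * ((∑ i ∈ Finset.Icc 1 n, (1 : ℝ) / (i : ℝ)) - 1)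
        - 1 / ((n : ℝ) + 1) := by
  have hn2 : (2:ℝ) ≤ (n:ℝ) := by exact_mod_cast hn
  have hnpos : 0 < n := by omega
  -- a.e. nonnegativity of the T i
  have hT0 : ∀ i, i ∈ Finset.Icc 1 n → ∀ᵐ ω ∂ℙ, 0 ≤ T i ω := by
    intro i hi
    have hipos : (0:ℝ) < i := by
      have := (Finset.mem_Icc.mp hi).1; exact_mod_cast Nat.lt_of_lt_of_le Nat.zero_lt_one this
    have h1 : ℙ (T i ⁻¹' Set.Iio 0) = 0 := by
      rw [← Measure.map_apply (hTmeas i) measurableSet_Iio, hTexp i hi,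
        expMeasure, gammaMeasure, withDensity_apply _ measurableSet_Iio]
      exact lintegral_gammaPDF_of_nonpos le_rfl
    rw [MeasureTheory.ae_iff]
    convert h1 using 2
    ext ω; simp [not_le]
  have hT0' : ∀ᵐ ω ∂ℙ, ∀ i, i ∈ Finset.Icc 1 n → 0 ≤ T i ω := by
    rw [MeasureTheory.ae_all_iff]
    intro i
    by_cases hi : i ∈ Finset.Icc 1 n
    · filter_upwards [hT0 i hi] with ω hω _; exact hω
    · filter_upwards with ω hh; exact absurd hh hi
  -- the exponential of minus a partial sum is a.e. bounded by 1
  have hgle : ∀ k : ℕ, ∀ᵐ ω ∂ℙ,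
      ‖Real.exp (-∑ i ∈ Finset.Icc (k+1) n, T i ω)‖ ≤ 1 := by
    intro k
    filter_upwards [hT0'] with ω hω
    rw [Real.norm_eq_abs, abs_of_pos (Real.exp_pos _)]
    rw [Real.exp_le_one_iff]
    refine neg_nonpos.mpr (Finset.sum_nonneg fun i hi => ?_)
    have hi' := Finset.mem_Icc.mp hi
    exact hω i (Finset.mem_Icc.mpr ⟨by omega, hi'.2⟩)
  have hgmeas : ∀ k : ℕ,
      Measurable (fun ω => Real.exp (-∑ i ∈ Finset.Icc (k+1) n, T i ω)) := fun k =>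
    ((Finset.measurable_sum _ (fun i _ => hTmeas i)).neg).exp
  have hgint : ∀ k : ℕ,
      Integrable (fun ω => Real.exp (-∑ i ∈ Finset.Icc (k+1) n, T i ω)) ℙ := fun k =>
    Integrable.mono' (integrable_const 1) (hgmeas k).aestronglyMeasurable (hgle k)
  -- value of E exp(-T i)
  have hmgfT : ∀ i, i ∈ Finset.Icc 1 n → mgf (T i) ℙ (-1) = (i:ℝ)/((i:ℝ)+1) := by
    intro i hi
    have hipos : (0:ℝ) < i := by
      have := (Finset.mem_Icc.mp hi).1
      exact_mod_cast Nat.lt_of_lt_of_le Nat.zero_lt_one this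
    rw [mgf]
    calc ∫ ω, Real.exp (-1 * T i ω) ∂ℙ
        = ∫ ω, (fun x => Real.exp (-x)) (T i ω) ∂ℙ := by
          simp only [neg_one_mul]
      _ = ∫ x, Real.exp (-x) ∂(Measure.map (T i) ℙ) :=
          (integral_map (hTmeas i).aemeasurable
            (measurable_id.neg.exp).aestronglyMeasurable).symm
      _ = (i:ℝ)/((i:ℝ)+1) := by rw [hTexp i hi]; exact aux_exp_integral hipos
  -- value of E exp(-∑_{k+1}^n T i)
  have hgval : ∀ k ∈ Finset.Icc 1 (n-1),
      ∫ ω, Real.exp (-∑ i ∈ Finset.Icc (k+1) n, T i ω) ∂ℙ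
        = ((k:ℝ)+1)/((n:ℝ)+1) := by
    intro k hk
    have hk' := Finset.mem_Icc.mp hk
    have h1 : ∫ ω, Real.exp (-∑ i ∈ Finset.Icc (k+1) n, T i ω) ∂ℙ
        = mgf (∑ i ∈ Finset.Icc (k+1) n, T i) ℙ (-1) := by
      rw [mgf]
      congr 1 with ω
      simp [neg_one_mul, Finset.sum_apply]
    rw [h1, iIndepFun.mgf_sum hTindep hTmeas,
      Finset.prod_congr rfl (fun i hi => hmgfT i ?_)]
    · exact aux_telescope k n (by omega)
    · have hi' := Finset.mem_Icc.mp hi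
      exact Finset.mem_Icc.mpr ⟨by omega, hi'.2⟩
  -- factoring the k-th term using independence
  have hterm : ∀ k ∈ Finset.Icc 1 (n-1),
      ∫ ω, (if K ω = k then (1:ℝ) else 0)
          * Real.exp (-∑ i ∈ Finset.Icc (k+1) n, T i ω) ∂ℙ
        = (ℙ {ω | K ω = k}).toReal * (((k:ℝ)+1)/((n:ℝ)+1)) := by
    intro k hk
    have hψmeas : Measurable (fun m : ℕ => if m = k then (1:ℝ) else 0) :=
      Measurable.ite (measurableSet_eq) measurable_const measurable_const
    have hφmeas : Measurable (fun v : Fin n → ℝ =>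
        Real.exp (-∑ j ∈ Finset.univ.filter (fun j : Fin n => k ≤ (j:ℕ)), v j)) :=
      ((Finset.measurable_sum _ (fun j _ => measurable_pi_apply j)).neg).exp
    have hsum : ∀ ω, (∑ j ∈ Finset.univ.filter (fun j : Fin n => k ≤ (j:ℕ)),
          T ((j:ℕ)+1) ω) = ∑ i ∈ Finset.Icc (k+1) n, T i ω := by
      intro ω
      refine Finset.sum_bij (fun (j : Fin n) _ => (j:ℕ)+1) ?_ ?_ ?_ ?_
      · intro j hj
        simp only [Finset.mem_filter, Finset.mem_univ, true_and] at hj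
        have := j.isLt
        simp only [Finset.mem_Icc]
        omega
      · intro a _ b _ hab
        exact Fin.ext (by omega)
      · intro m hm
        have hm' := Finset.mem_Icc.mp hm
        refine ⟨⟨m-1, by omega⟩, ?_, by simp; omega⟩
        simp only [Finset.mem_filter, Finset.mem_univ, true_and]
        omega
      · intro j _; rfl
    have hcomp : ((fun v : Fin n → ℝ =>
          Real.exp (-∑ j ∈ Finset.univ.filter (fun j : Fin n => k ≤ (j:ℕ)), v j))
        ∘ (fun ω (i : Fin n) => T (i + 1) ω))
        = fun ω => Real.exp (-∑ i ∈ Finset.Icc (k+1) n, T i ω) := by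
      funext ω
      simp only [Function.comp_apply]
      rw [hsum ω]
    have hindep2 := hKindep.comp hφmeas hψmeas
    rw [hcomp] at hindep2
    have hXint : Integrable ((fun m : ℕ => if m = k then (1:ℝ) else 0) ∘ K) ℙ := by
      refine Integrable.mono' (integrable_const 1)
        (hψmeas.comp hKmeas).aestronglyMeasurable (ae_of_all _ fun ω => ?_)
      simp only [Function.comp_apply]
      split_ifs <;> simp
    have hfact := IndepFun.integral_mul_eq_mul_integral hindep2.symm hXint.aestronglyMeasurable (hgint k).aestronglyMeasurable
    have e1 : (fun ω => (if K ω = k then (1:ℝ) else 0)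
          * Real.exp (-∑ i ∈ Finset.Icc (k+1) n, T i ω))
        = ((fun m : ℕ => if m = k then (1:ℝ) else 0) ∘ K
          * fun ω => Real.exp (-∑ i ∈ Finset.Icc (k+1) n, T i ω)) := rfl
    rw [e1, hfact]
    have e2 : ((fun m : ℕ => if m = k then (1:ℝ) else 0) ∘ K)
        = fun ω => if K ω = k then (1:ℝ) else 0 := rfl
    rw [e2]
    have hXval : ∫ ω, (if K ω = k then (1:ℝ) else 0) ∂ℙ
        = (ℙ {ω | K ω = k}).toReal := by
      have hset : MeasurableSet {ω | K ω = k} := hKmeas (measurableSet_singleton k)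
      have he : (fun ω => if K ω = k then (1:ℝ) else 0)
          = Set.indicator {ω | K ω = k} (fun _ => (1:ℝ)) := by
        ext ω
        by_cases h : K ω = k <;> simp [h, Set.indicator]
      rw [he, integral_indicator_const _ hset, smul_eq_mul, mul_one, Measure.real]
    rw [hXval, hgval k hk]
  -- split the integral according to the value of K
  have hsplit : ∀ ω, Real.exp (-∑ i ∈ Finset.Icc (K ω + 1) n, T i ω)
      = ∑ k ∈ Finset.Icc 1 (n-1), (if K ω = k then (1:ℝ) else 0)
          * Real.exp (-∑ i ∈ Finset.Icc (k+1) n, T i ω) := by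
    intro ω
    simp only [ite_mul, one_mul, zero_mul]
    rw [Finset.sum_ite_eq (Finset.Icc 1 (n-1)) (K ω)
      (fun k => Real.exp (-∑ i ∈ Finset.Icc (k+1) n, T i ω)), if_pos (hKrange ω)]
  have htermint : ∀ k ∈ Finset.Icc 1 (n-1),
      Integrable (fun ω => (if K ω = k then (1:ℝ) else 0)
          * Real.exp (-∑ i ∈ Finset.Icc (k+1) n, T i ω)) ℙ := by
    intro k _
    refine Integrable.mono' (integrable_const 1)
      (((Measurable.ite (hKmeas (measurableSet_singleton k)) measurable_const
        measurable_const).mul (hgmeas k)).aestronglyMeasurable) ?_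
    filter_upwards [hgle k] with ω hω
    rw [norm_mul]
    calc ‖if K ω = k then (1:ℝ) else 0‖ * ‖Real.exp (-∑ i ∈ Finset.Icc (k+1) n, T i ω)‖
        ≤ 1 * 1 := by
          refine mul_le_mul ?_ hω (norm_nonneg _) zero_le_one
          split_ifs <;> simp
      _ = 1 := mul_one 1
  -- assemble
  calc ∫ ω, Real.exp (-∑ i ∈ Finset.Icc (K ω + 1) n, T i ω) ∂ℙ
      = ∫ ω, ∑ k ∈ Finset.Icc 1 (n-1), (if K ω = k then (1:ℝ) else 0)
          * Real.exp (-∑ i ∈ Finset.Icc (k+1) n, T i ω) ∂ℙ :=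
        integral_congr_ae (ae_of_all _ hsplit)
    _ = ∑ k ∈ Finset.Icc 1 (n-1), ∫ ω, (if K ω = k then (1:ℝ) else 0)
          * Real.exp (-∑ i ∈ Finset.Icc (k+1) n, T i ω) ∂ℙ :=
        integral_finset_sum _ htermint
    _ = ∑ k ∈ Finset.Icc 1 (n-1), (2/((n:ℝ)-1)) * (1/((k:ℝ)+2)) := by
        refine Finset.sum_congr rfl fun k hk => ?_
        have hnn : (0:ℝ) ≤ 2*((n:ℝ)+1)/(((n:ℝ)-1)*((k:ℝ)+2)*((k:ℝ)+1)) := by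
          apply div_nonneg (by positivity)
          exact mul_nonneg (mul_nonneg (by linarith) (by positivity)) (by positivity)
        rw [hterm k hk, hKdist k hk, ENNReal.toReal_ofReal hnn]
        have h1 : ((k:ℝ)+1) ≠ 0 := by positivity
        have h2 : ((k:ℝ)+2) ≠ 0 := by positivity
        have h3 : ((n:ℝ)+1) ≠ 0 := by positivity
        have h4 : ((n:ℝ)-1) ≠ 0 := by nlinarith
        field_simp
    _ = 2/((n:ℝ)-1) * ((∑ i ∈ Finset.Icc 1 n, (1:ℝ)/(i:ℝ)) - 3/2 + 1/((n:ℝ)+1)) := by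
        rw [← Finset.mul_sum, aux_harm n hn]
    _ = 2 / ((n : ℝ) - 1) * ((∑ i ∈ Finset.Icc 1 n, (1 : ℝ) / (i : ℝ)) - 1)
        - 1 / ((n : ℝ) + 1) := by
        have h3 : ((n:ℝ)+1) ≠ 0 := by positivity
        have h4 : ((n:ℝ)-1) ≠ 0 := by nlinarith
        field_simp
        ring
end

section
/- For each integer n ≥ 2, let T_1, …, T_n be independent random variables with T_i exponentially distributed with rate i, and let K be an independent random index in {1, …, n−1} with P(K = k) = 2(n+1)/((n−1)(k+2)(k+1)); set τ^{(n)} = T_{K+1} + … + T_n. Then for every real y > 1, lim_{n→∞} n · E[exp(−y·τ^{(n)})] = 2/(y−1). -/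
open MeasureTheory ProbabilityTheory Filter Topology

section Aux

lemma expMeasure_exp_integral {r y : ℝ} (hr : 0 < r) (hy : 0 < y) :
    ∫ x, Real.exp (-y * x) ∂(expMeasure r) = r / (r + y) := by
  have hry : 0 < r + y := by linarith
  have hmeas : Measurable fun x : ℝ => Real.exp (-y * x) :=
    (measurable_id.const_mul (-y)).exp
  rw [integral_eq_lintegral_of_nonneg_ae
      (Filter.Eventually.of_forall fun x => (Real.exp_pos _).le)
      hmeas.aestronglyMeasurable]
  have hpdfmeas : Measurable (gammaPDF 1 r) :=
    (measurable_gammaPDFReal 1 r).ennreal_ofReal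
  have hpdfmeas' : Measurable (exponentialPDF (r + y)) :=
    (measurable_exponentialPDFReal (r + y)).ennreal_ofReal
  have key : ∫⁻ x, ENNReal.ofReal (Real.exp (-y * x)) ∂(expMeasure r)
      = ENNReal.ofReal (r / (r + y)) := by
    rw [expMeasure, gammaMeasure,
      lintegral_withDensity_eq_lintegral_mul _ hpdfmeas hmeas.ennreal_ofReal]
    have hpt : ∀ x : ℝ, (gammaPDF 1 r * fun x => ENNReal.ofReal (Real.exp (-y * x))) x
        = ENNReal.ofReal (r / (r + y)) * exponentialPDF (r + y) x := by
      intro x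
      have h1 : gammaPDF 1 r x = exponentialPDF r x := rfl
      simp only [Pi.mul_apply, h1, exponentialPDF_eq]
      split_ifs with hx
      · rw [← ENNReal.ofReal_mul (by positivity), ← ENNReal.ofReal_mul (by positivity)]
        congr 1
        rw [show (-((r + y) * x)) = -(r * x) + -y * x by ring, Real.exp_add]
        field_simp
      · simp
    rw [lintegral_congr hpt, lintegral_const_mul _ hpdfmeas',
      lintegral_exponentialPDF_eq_one hry, mul_one]
  rw [key, ENNReal.toReal_ofReal (by positivity)]

lemma pow_bound {b ε : ℝ} (hb : 0 < b) (hε : 0 < ε) (m : ℕ) :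
    (b / (b + ε)) ^ m ≤ b / (b + m * ε) := by
  have h1 : 0 < b + ε := by linarith
  have h2 : 0 < b + m * ε := by positivity
  rw [div_pow, div_le_div_iff₀ (by positivity) h2]
  have hdb : (0:ℝ) ≤ ε / b := by positivity
  have key : (1 : ℝ) + m * (ε / b) ≤ (1 + ε / b) ^ m :=
    one_add_mul_le_pow (by linarith) m
  have h3 : b ^ m * (b + m * ε) = b ^ (m + 1) * (1 + m * (ε / b)) := by
    field_simp; ring
  have h4 : b ^ (m + 1) * (1 + ε / b) ^ m = b * (b + ε) ^ m := by
    rw [pow_succ]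
    calc b ^ m * b * (1 + ε / b) ^ m = (b * (1 + ε / b)) ^ m * b := by rw [mul_pow]; ring
      _ = b * (b + ε) ^ m := by rw [show b * (1 + ε / b) = b + ε by field_simp]; ring
  calc b ^ m * (b + m * ε) = b ^ (m + 1) * (1 + m * (ε / b)) := h3
    _ ≤ b ^ (m + 1) * (1 + ε / b) ^ m := mul_le_mul_of_nonneg_left key (by positivity)
    _ = b * (b + ε) ^ m := h4

lemma prod_ratio_one {n : ℕ} (hn : 1 ≤ n) :
    ∏ i ∈ Finset.Icc 2 n, (i : ℝ) / ((i : ℝ) + 1) = 2 / ((n : ℝ) + 1) := by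
  induction n, hn using Nat.le_induction with
  | base => norm_num
  | succ n hn ih =>
    rw [Finset.prod_Icc_succ_top (by omega), ih]
    have h1 : (n : ℝ) + 1 ≠ 0 := by positivity
    push_cast
    have h2 : (n : ℝ) + 1 + 1 ≠ 0 := by positivity
    field_simp

lemma prod_ratio_three {n : ℕ} (hn : 1 ≤ n) :
    ∏ i ∈ Finset.Icc 2 n, ((i : ℝ) + 1) / ((i : ℝ) + 3) = 12 / (((n : ℝ) + 2) * ((n : ℝ) + 3)) := by
  induction n, hn using Nat.le_induction with
  | base => norm_num
  | succ n hn ih =>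
    rw [Finset.prod_Icc_succ_top (by omega), ih]
    push_cast
    have h1 : (n : ℝ) + 2 ≠ 0 := by positivity
    have h2 : (n : ℝ) + 3 ≠ 0 := by positivity
    have h3 : (n : ℝ) + 1 + 3 ≠ 0 := by positivity
    field_simp
    ring

lemma prod_shift_tendsto_zero {y : ℝ} (hy : 1 < y) :
    Tendsto (fun n : ℕ => ∏ i ∈ Finset.Icc 2 n, ((i : ℝ) + 1) / ((i : ℝ) + y)) atTop (𝓝 0) := by
  have hε : 0 < y - 1 := by linarith
  set P : ℕ → ℝ := fun n => ∏ i ∈ Finset.Icc 2 n, ((i : ℝ) + 1) / ((i : ℝ) + y) with hP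
  have hiy : ∀ i : ℕ, (0:ℝ) < (i : ℝ) + y := fun i => by
    have := Nat.cast_nonneg (α := ℝ) i; linarith
  have hposfac : ∀ i : ℕ, (0:ℝ) < ((i : ℝ) + 1) / ((i : ℝ) + y) := fun i =>
    div_pos (by positivity) (hiy i)
  have hpos : ∀ n, 0 < P n := fun n => Finset.prod_pos fun i _ => hposfac i
  have hle1 : ∀ i : ℕ, ((i : ℝ) + 1) / ((i : ℝ) + y) ≤ 1 := fun i =>
    div_le_one_of_le₀ (by linarith) (hiy i).le
  have hanti : Antitone P := by
    apply antitone_nat_of_succ_le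
    intro n
    rcases Nat.eq_zero_or_pos n with h | h
    · subst h; simp [hP]
    · rw [hP]
      simp only
      rw [Finset.prod_Icc_succ_top (by omega)]
      calc (∏ i ∈ Finset.Icc 2 n, ((i : ℝ) + 1) / ((i : ℝ) + y)) *
            ((((n+1 : ℕ) : ℝ) + 1) / (((n+1 : ℕ) : ℝ) + y))
          ≤ (∏ i ∈ Finset.Icc 2 n, ((i : ℝ) + 1) / ((i : ℝ) + y)) * 1 :=
            mul_le_mul_of_nonneg_left (hle1 _) (hpos n).le
        _ = P n := by rw [mul_one]
  obtain ⟨L, hL⟩ : ∃ L, Tendsto P atTop (𝓝 L) :=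
    ⟨_, tendsto_atTop_ciInf hanti ⟨0, fun x ⟨n, hn⟩ => hn ▸ (hpos n).le⟩⟩
  obtain ⟨m, hm⟩ := exists_nat_ge (2 / (y - 1))
  have hm0 : 0 < m := by
    by_contra h
    push_neg at h
    interval_cases m
    simp only [Nat.cast_zero] at hm
    have : 0 < 2 / (y - 1) := by positivity
    linarith
  have hmε : 2 ≤ (m : ℝ) * (y - 1) := by
    rw [div_le_iff₀ hε] at hm
    linarith
  -- P n ^ m ≤ 12 / ((n+2)(n+3)) for n ≥ 1
  have hbound : ∀ n : ℕ, 1 ≤ n → P n ^ m ≤ 12 / (((n : ℝ) + 2) * ((n : ℝ) + 3)) := by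
    intro n hn
    rw [hP]
    simp only
    rw [← Finset.prod_pow, ← prod_ratio_three hn]
    apply Finset.prod_le_prod
    · intro i _; positivity
    · intro i _
      calc (((i : ℝ) + 1) / ((i : ℝ) + y)) ^ m
          ≤ ((i : ℝ) + 1) / (((i : ℝ) + 1) + m * (y - 1)) := by
            have := pow_bound (b := (i : ℝ) + 1) (ε := y - 1) (by positivity) hε m
            rwa [show (i : ℝ) + 1 + (y - 1) = (i : ℝ) + y by ring] at this
        _ ≤ ((i : ℝ) + 1) / ((i : ℝ) + 3) := by
            apply div_le_div_of_nonneg_left (by positivity) (by positivity)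
            linarith
  have hsq : Tendsto (fun n => P n ^ m) atTop (𝓝 0) := by
    apply squeeze_zero' (Filter.eventually_atTop.2 ⟨1, fun n _ => by positivity⟩)
      (Filter.eventually_atTop.2 ⟨1, fun n hn => hbound n hn⟩)
    have hden : Tendsto (fun n : ℕ => ((n : ℝ) + 2) * ((n : ℝ) + 3)) atTop atTop := by
      apply Tendsto.atTop_mul_atTop₀ <;>
        exact tendsto_atTop_add_const_right _ _ tendsto_natCast_atTop_atTop
    simpa using (tendsto_const_nhds (x := (12:ℝ))).div_atTop hden
  have hLm : L ^ m = 0 := tendsto_nhds_unique (hL.pow m) hsq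
  have hL0 : L = 0 := by
    have := pow_eq_zero_iff (n := m) (by omega) |>.mp hLm
    exact this
  rwa [hL0] at hL

lemma telescope_sum {y : ℝ} (hy : 1 < y) {n : ℕ} (hn : 2 ≤ n) :
    ∑ k ∈ Finset.Icc 1 (n-1),
      (∏ i ∈ Finset.Icc (k+1) n, (i:ℝ)/((i:ℝ)+y)) / (((k:ℝ)+2)*((k:ℝ)+1))
      = (1/(y-1)) * (1/((n:ℝ)+1) - (∏ i ∈ Finset.Icc 2 n, (i:ℝ)/((i:ℝ)+y))/2) := by
  set a : ℕ → ℝ := fun k => ∏ i ∈ Finset.Icc (k+1) n, (i:ℝ)/((i:ℝ)+y) with ha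
  set f : ℕ → ℝ := fun k => a k / ((y-1) * ((k:ℝ)+1)) with hf
  have hy1 : y - 1 ≠ 0 := by linarith
  have hstep : ∀ k ∈ Finset.Icc 1 (n-1),
      a k / (((k:ℝ)+2)*((k:ℝ)+1)) = f (k+1) - f k := by
    intro k hk
    simp only [Finset.mem_Icc] at hk
    have hkn : k + 1 ≤ n := by omega
    have hsplit : a k = (((k+1:ℕ):ℝ)/(((k+1:ℕ):ℝ)+y)) * a (k+1) := by
      rw [ha]
      simp only
      rw [← Finset.Ico_add_one_right_eq_Icc, Finset.prod_eq_prod_Ico_succ_bot (by omega), Finset.Ico_add_one_right_eq_Icc]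
    rw [hf]
    simp only
    rw [hsplit]
    have h1 : ((k:ℝ)+1) ≠ 0 := by positivity
    have h2 : ((k:ℝ)+2) ≠ 0 := by positivity
    have h3 : ((k+1:ℕ):ℝ) + y ≠ 0 := by
      have := Nat.cast_nonneg (α := ℝ) (k+1); linarith
    have h4 : ((k+1:ℕ):ℝ) + 1 ≠ 0 := by positivity
    push_cast at h3 h4 ⊢
    field_simp
    ring
  rw [Finset.sum_congr rfl hstep]
  have htel : ∑ k ∈ Finset.Icc 1 (n-1), (f (k+1) - f k) = f n - f 1 := by
    rw [← Finset.Ico_add_one_right_eq_Icc, show n - 1 + 1 = n by omega, Finset.sum_Ico_eq_sum_range]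
    have := Finset.sum_range_sub (fun i => f (1 + i)) (n-1)
    rw [show 1 + (n-1) = n by omega] at this
    exact this
  rw [htel, hf]
  simp only
  have han : a n = 1 := by
    rw [ha]; simp only
    rw [Finset.Icc_eq_empty (by omega), Finset.prod_empty]
  have ha1 : a 1 = ∏ i ∈ Finset.Icc 2 n, (i:ℝ)/((i:ℝ)+y) := rfl
  rw [han, ha1.symm]
  have h5 : (n:ℝ) + 1 ≠ 0 := by positivity
  push_cast
  field_simp
  ring

end Aux

/-- For each `n ≥ 2` let `T_1, …, T_n` be independent exponentials of rates
`1, …, n` and `K` an independent index with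
`P(K = k) = 2(n+1)/((n−1)(k+2)(k+1))` on `{1, …, n−1}`; set
`τ⁽ⁿ⁾ = T_{K+1} + … + T_n`.  Then for every `y > 1`,
`n · E[e^{−y·τ⁽ⁿ⁾}] → 2/(y−1)` as `n → ∞`. -/
theorem statement12
    (Ω : ℕ → Type*) [∀ n, MeasureSpace (Ω n)]
    [∀ n, IsProbabilityMeasure (ℙ : Measure (Ω n))]
    (T : ∀ n, ℕ → Ω n → ℝ) (K : ∀ n, Ω n → ℕ)
    (hTmeas : ∀ n i, Measurable (T n i))
    (hTindep : ∀ n, iIndepFun (T n) ℙ)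
    (hTexp : ∀ n, ∀ i ∈ Finset.Icc 1 n, Measure.map (T n i) ℙ = expMeasure i)
    (hKmeas : ∀ n, Measurable (K n))
    (hKrange : ∀ n, 2 ≤ n → ∀ ω, K n ω ∈ Finset.Icc 1 (n - 1))
    (hKindep : ∀ n, IndepFun (fun ω (i : Fin n) => T n (i + 1) ω) (K n) ℙ)
    (hKdist : ∀ n, 2 ≤ n → ∀ k ∈ Finset.Icc 1 (n - 1),
      ℙ {ω | K n ω = k} = ENNReal.ofReal
        (2 * ((n : ℝ) + 1) / (((n : ℝ) - 1) * ((k : ℝ) + 2) * ((k : ℝ) + 1))))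
    (y : ℝ) (hy : 1 < y) :
    Tendsto (fun n : ℕ =>
        (n : ℝ) *
          ∫ ω, Real.exp (-y * ∑ i ∈ Finset.Icc (K n ω + 1) n, T n i ω) ∂ℙ)
      atTop (nhds (2 / (y - 1))) := by
  have hy0 : 0 < y := by linarith
  -- Step 1: exact formula for the integral when n ≥ 2
  have hformula : ∀ n : ℕ, 2 ≤ n →
      (∫ ω, Real.exp (-y * ∑ i ∈ Finset.Icc (K n ω + 1) n, T n i ω) ∂ℙ)
        = ∑ k ∈ Finset.Icc 1 (n-1),
            (2 * ((n : ℝ) + 1) / (((n : ℝ) - 1) * ((k : ℝ) + 2) * ((k : ℝ) + 1)))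
              * ∏ i ∈ Finset.Icc (k+1) n, (i:ℝ)/((i:ℝ)+y) := by
    intro n hn
    -- a.e. nonnegativity of the T's
    have haenn : ∀ᵐ ω ∂(ℙ : Measure (Ω n)), ∀ i ∈ Finset.Icc 1 n, 0 ≤ T n i ω := by
      rw [Finset.eventually_all]
      intro i hi
      have hnull : (ℙ : Measure (Ω n)) {ω | T n i ω < 0} = 0 := by
        have h1 : {ω | T n i ω < 0} = T n i ⁻¹' (Set.Iio 0) := rfl
        rw [h1, ← Measure.map_apply (hTmeas n i) measurableSet_Iio, hTexp n i hi,
          expMeasure, gammaMeasure, withDensity_apply _ measurableSet_Iio]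
        exact lintegral_exponentialPDF_of_nonpos le_rfl
      rw [ae_iff]
      convert hnull using 2
      ext ω
      simp [not_le]
    -- reindexing between Fin n sums and Icc sums
    have hreindex : ∀ k : ℕ, ∀ ω, (∑ j : Fin n, if k ≤ (j:ℕ) then T n ((j:ℕ)+1) ω else 0)
        = ∑ i ∈ Finset.Icc (k+1) n, T n i ω := by
      intro k ω
      rw [Fin.sum_univ_eq_sum_range (fun j => if k ≤ j then T n (j+1) ω else 0) n,
        ← Finset.sum_filter]
      have hset : (Finset.range n).filter (fun j => k ≤ j) = Finset.Ico k n := by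
        ext j; simp [Finset.mem_filter, Finset.mem_range, Finset.mem_Ico]; omega
      rw [hset]
      rw [show (∑ j ∈ Finset.Ico k n, T n (j+1) ω)
          = ∑ i ∈ Finset.Ico (k+1) (n+1), T n i ω by
        rw [Finset.sum_Ico_eq_sum_range, Finset.sum_Ico_eq_sum_range,
          show n + 1 - (k + 1) = n - k by omega]
        exact Finset.sum_congr rfl fun j _ => by rw [show k + j + 1 = k + 1 + j by omega]]
      rw [Finset.Ico_add_one_right_eq_Icc]
    -- the mgf products
    have hmgf : ∀ k : ℕ, 1 ≤ k →
        (∫ ω, Real.exp (-y * ∑ i ∈ Finset.Icc (k+1) n, T n i ω) ∂ℙ)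
          = ∏ i ∈ Finset.Icc (k+1) n, (i:ℝ)/((i:ℝ)+y) := by
      intro k hk
      have h1 : (∫ ω, Real.exp (-y * ∑ i ∈ Finset.Icc (k+1) n, T n i ω) ∂ℙ)
          = mgf (∑ i ∈ Finset.Icc (k+1) n, T n i) ℙ (-y) := by
        rw [mgf]
        refine integral_congr_ae (Filter.Eventually.of_forall fun ω => ?_)
        simp [Finset.sum_apply]
      rw [h1, (hTindep n).mgf_sum (hTmeas n)]
      refine Finset.prod_congr rfl fun i hi => ?_
      simp only [Finset.mem_Icc] at hi
      have hi' : i ∈ Finset.Icc 1 n := Finset.mem_Icc.2 ⟨by omega, hi.2⟩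
      have h2 : mgf (T n i) ℙ (-y) = ∫ x, Real.exp (-y * x) ∂(expMeasure i) := by
        rw [← hTexp n i hi', mgf]
        exact (integral_map (hTmeas n i).aemeasurable
          ((measurable_id.const_mul (-y)).exp).aestronglyMeasurable).symm
      rw [h2, expMeasure_exp_integral (by exact_mod_cast Nat.lt_of_lt_of_le Nat.zero_lt_one (by omega : 1 ≤ i) : (0:ℝ) < (i:ℝ)) hy0]
    classical
    set V : Ω n → (Fin n → ℝ) := fun ω j => T n ((j:ℕ)+1) ω with hV
    have hVmeas : Measurable V := measurable_pi_lambda _ fun j => hTmeas n ((j:ℕ)+1)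
    have hfactor : ∀ k ∈ Finset.Icc 1 (n-1),
        (∫ ω, (if K n ω = k then (1:ℝ) else 0)
            * Real.exp (-y * ∑ i ∈ Finset.Icc (k+1) n, T n i ω) ∂ℙ)
          = ((ℙ : Measure (Ω n)) {ω | K n ω = k}).toReal
              * ∏ i ∈ Finset.Icc (k+1) n, (i:ℝ)/((i:ℝ)+y) := by
      intro k hk
      simp only [Finset.mem_Icc] at hk
      set φ : (Fin n → ℝ) → ℝ :=
        fun v => Real.exp (-y * ∑ j : Fin n, if k ≤ (j:ℕ) then v j else 0) with hφ
      set ψ : ℕ → ℝ := fun m => if m = k then 1 else 0 with hψ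
      have hφm : Measurable φ := by
        apply Measurable.exp
        apply Measurable.const_mul
        apply Finset.measurable_sum
        intro j _
        by_cases h : k ≤ (j:ℕ)
        · simpa [h] using measurable_pi_apply j
        · simpa [h] using measurable_const
      have hψm : Measurable ψ := measurable_from_top
      have hindep : IndepFun (fun ω => φ (V ω)) (fun ω => ψ (K n ω)) ℙ :=
        (hKindep n).comp hφm hψm
      have hφV : ∀ ω, φ (V ω) = Real.exp (-y * ∑ i ∈ Finset.Icc (k+1) n, T n i ω) := by
        intro ω
        rw [hφ]
        simp only [hV]
        rw [hreindex k ω]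
      have heq : (fun ω => (if K n ω = k then (1:ℝ) else 0)
            * Real.exp (-y * ∑ i ∈ Finset.Icc (k+1) n, T n i ω))
          = fun ω => φ (V ω) * ψ (K n ω) := by
        funext ω
        rw [hφV ω, hψ, mul_comm]
      rw [heq, hindep.integral_fun_mul_eq_mul_integral (hφm.comp hVmeas).aestronglyMeasurable
        (hψm.comp (hKmeas n)).aestronglyMeasurable]
      have hEφ : (∫ ω, φ (V ω) ∂ℙ) = ∏ i ∈ Finset.Icc (k+1) n, (i:ℝ)/((i:ℝ)+y) := by
        rw [show (fun ω => φ (V ω))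
            = fun ω => Real.exp (-y * ∑ i ∈ Finset.Icc (k+1) n, T n i ω) from funext hφV]
        exact hmgf k hk.1
      have hEψ : (∫ ω, ψ (K n ω) ∂ℙ) = ((ℙ : Measure (Ω n)) {ω | K n ω = k}).toReal := by
        have hset : MeasurableSet {ω | K n ω = k} := (hKmeas n) (measurableSet_singleton k)
        have h1 : (fun ω => ψ (K n ω)) = Set.indicator {ω | K n ω = k} (fun _ => (1:ℝ)) := by
          funext ω
          by_cases h : K n ω = k <;> simp [hψ, h, Set.indicator_apply, Set.mem_setOf_eq]
        rw [h1, integral_indicator_const _ hset, smul_eq_mul, mul_one, measureReal_def]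
      rw [hEφ, hEψ]
      ring
    have hInt : ∀ k ∈ Finset.Icc 1 (n-1), Integrable
        (fun ω => (if K n ω = k then (1:ℝ) else 0)
          * Real.exp (-y * ∑ i ∈ Finset.Icc (k+1) n, T n i ω)) ℙ := by
      intro k hk
      simp only [Finset.mem_Icc] at hk
      have hm : Measurable fun ω => (if K n ω = k then (1:ℝ) else 0)
          * Real.exp (-y * ∑ i ∈ Finset.Icc (k+1) n, T n i ω) := by
        apply Measurable.mul
        · exact (measurable_from_top (f := fun m : ℕ => if m = k then (1:ℝ) else 0)).comp
            (hKmeas n)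
        · exact (((Finset.measurable_sum _ fun i _ => hTmeas n i)).const_mul (-y)).exp
      refine Integrable.mono' (integrable_const (1:ℝ)) hm.aestronglyMeasurable ?_
      filter_upwards [haenn] with ω hω
      have hsum : 0 ≤ ∑ i ∈ Finset.Icc (k+1) n, T n i ω := by
        apply Finset.sum_nonneg
        intro i hi
        simp only [Finset.mem_Icc] at hi
        exact hω i (Finset.mem_Icc.2 ⟨by omega, hi.2⟩)
      have hexp : Real.exp (-y * ∑ i ∈ Finset.Icc (k+1) n, T n i ω) ≤ 1 := by
        rw [Real.exp_le_one_iff]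
        exact mul_nonpos_of_nonpos_of_nonneg (by linarith) hsum
      rw [Real.norm_eq_abs, abs_mul, abs_of_nonneg (Real.exp_pos _).le]
      have h1 : |if K n ω = k then (1:ℝ) else 0| ≤ 1 := by split_ifs <;> simp
      exact mul_le_one₀ h1 (Real.exp_pos _).le hexp
    have hdecomp : (fun ω : Ω n => Real.exp (-y * ∑ i ∈ Finset.Icc (K n ω + 1) n, T n i ω))
        = fun ω => ∑ k ∈ Finset.Icc 1 (n-1), (if K n ω = k then (1:ℝ) else 0)
            * Real.exp (-y * ∑ i ∈ Finset.Icc (k+1) n, T n i ω) := by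
      funext ω
      rw [eq_comm]
      simp only [ite_mul, one_mul, zero_mul]
      rw [Finset.sum_ite_eq (Finset.Icc 1 (n-1)) (K n ω)
        (fun k => Real.exp (-y * ∑ i ∈ Finset.Icc (k+1) n, T n i ω)),
        if_pos (hKrange n hn ω)]
    rw [hdecomp, integral_finset_sum _ hInt]
    refine Finset.sum_congr rfl fun k hk => ?_
    have hp : (0:ℝ) ≤ 2 * ((n : ℝ) + 1) / (((n : ℝ) - 1) * ((k : ℝ) + 2) * ((k : ℝ) + 1)) := by
      have hn2 : (2:ℝ) ≤ (n:ℝ) := by exact_mod_cast hn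
      have hn1 : (0:ℝ) < (n:ℝ) - 1 := by linarith
      positivity
    rw [hfactor k hk, hKdist n hn k hk, ENNReal.toReal_ofReal hp]
  -- Step 2: limit
  set P : ℕ → ℝ := fun n => ∏ i ∈ Finset.Icc 2 n, ((i:ℝ)+1)/((i:ℝ)+y) with hP
  have hy1 : y - 1 ≠ 0 := by linarith
  have hev : ∀ n : ℕ, 2 ≤ n →
      (n:ℝ) * ∫ ω, Real.exp (-y * ∑ i ∈ Finset.Icc (K n ω + 1) n, T n i ω) ∂ℙ
        = (2/(y-1)) * ((1 + ((n:ℝ) - 1)⁻¹) * (1 - P n)) := by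
    intro n hn
    have hn2 : (2:ℝ) ≤ (n:ℝ) := by exact_mod_cast hn
    have hn1 : (n:ℝ) - 1 ≠ 0 := by linarith
    have hn1' : (n:ℝ) + 1 ≠ 0 := by positivity
    rw [hformula n hn]
    have hsum : ∑ k ∈ Finset.Icc 1 (n-1),
          (2 * ((n : ℝ) + 1) / (((n : ℝ) - 1) * ((k : ℝ) + 2) * ((k : ℝ) + 1)))
            * ∏ i ∈ Finset.Icc (k+1) n, (i:ℝ)/((i:ℝ)+y)
        = (2 * ((n:ℝ)+1)/((n:ℝ)-1)) * ∑ k ∈ Finset.Icc 1 (n-1),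
            (∏ i ∈ Finset.Icc (k+1) n, (i:ℝ)/((i:ℝ)+y)) / (((k:ℝ)+2)*((k:ℝ)+1)) := by
      rw [Finset.mul_sum]
      refine Finset.sum_congr rfl fun k hk => ?_
      have h2 : ((k:ℝ)+2) ≠ 0 := by positivity
      have h3 : ((k:ℝ)+1) ≠ 0 := by positivity
      generalize (∏ i ∈ Finset.Icc (k+1) n, (i:ℝ)/((i:ℝ)+y)) = A
      simp only [← div_div]
      ring
    rw [hsum, telescope_sum hy hn]
    have hsplit : (∏ i ∈ Finset.Icc 2 n, (i:ℝ)/((i:ℝ)+y)) = (2/((n:ℝ)+1)) * P n := by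
      rw [hP]
      simp only
      rw [← prod_ratio_one (by omega : 1 ≤ n), ← Finset.prod_mul_distrib]
      refine Finset.prod_congr rfl fun i hi => ?_
      have h1 : ((i:ℝ)+1) ≠ 0 := by positivity
      have h2 : ((i:ℝ)+y) ≠ 0 := by
        have := Nat.cast_nonneg (α := ℝ) i; linarith
      field_simp
    rw [hsplit]
    field_simp
    ring
  have hlim : Tendsto (fun n : ℕ => (2/(y-1)) * ((1 + ((n:ℝ) - 1)⁻¹) * (1 - P n)))
      atTop (𝓝 (2/(y-1))) := by
    have t0 : Tendsto (fun n : ℕ => (n:ℝ) - 1) atTop atTop := by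
      simpa [sub_eq_add_neg] using
        tendsto_atTop_add_const_right atTop (-1 : ℝ) tendsto_natCast_atTop_atTop
    have t1 : Tendsto (fun n : ℕ => ((n:ℝ) - 1)⁻¹) atTop (𝓝 0) := t0.inv_tendsto_atTop
    have t2 : Tendsto P atTop (𝓝 0) := prod_shift_tendsto_zero hy
    have c1 : Tendsto (fun _ : ℕ => (1:ℝ)) atTop (𝓝 1) := tendsto_const_nhds
    have := ((c1.add t1).mul (c1.sub t2)).const_mul (2/(y-1))
    simpa using this
  refine hlim.congr' ?_
  filter_upwards [eventually_ge_atTop 2] with n hn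
  exact (hev n hn).symm
end

section
/- For each integer n ≥ 2, let T_1, …, T_n be independent random variables with T_i exponentially distributed with rate i, and let K be an independent random index in {1, …, n−1} with P(K = k) = 2(n+1)/((n−1)(k+2)(k+1)); set U_n = T_1 + … + T_n and τ^{(n)} = T_{K+1} + … + T_n. Then for all reals x > 0 and y > 1, lim_{n→∞} n^{x+1} · E[exp(−x·U_n − y·τ^{(n)})] = 2·Γ(x+1)/(y−1). -/
open MeasureTheory ProbabilityTheory Filter Topology Finset Real
open scoped ENNReal NNReal


-- L1
lemma st13_prod_tendsto {s : ℝ} (hs : 0 < s) :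
    Tendsto (fun n : ℕ => (n:ℝ)^s * ∏ i ∈ Finset.Icc 1 n, (i:ℝ)/((i:ℝ)+s)) atTop
      (𝓝 (Real.Gamma (s+1))) := by
  rw [Real.Gamma_add_one hs.ne']
  refine ((Real.GammaSeq_tendsto_Gamma s).const_mul s).congr' ?_
  filter_upwards [eventually_ge_atTop 1] with n hn
  have h1 : ∏ i ∈ Finset.Icc 1 n, ((i:ℝ)+s) = ∏ j ∈ Finset.range n, (s+((j:ℝ)+1)) := by
    rw [← Finset.Ico_add_one_right_eq_Icc, Finset.prod_Ico_eq_prod_range]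
    simp [add_comm]
  have h2 : ∏ i ∈ Finset.Icc 1 n, (i:ℝ) = (n.factorial : ℝ) := by
    rw [← Nat.cast_prod, ← Finset.Ico_add_one_right_eq_Icc, Finset.prod_Ico_id_eq_factorial]
  have h3 : ∏ j ∈ Finset.range (n+1), (s+(j:ℝ)) = (∏ j ∈ Finset.range n, (s+((j:ℝ)+1))) * s := by
    rw [Finset.prod_range_succ']
    simp only [Nat.cast_succ, Nat.cast_zero, add_zero]
  have hne : ∀ i ∈ Finset.Icc 1 n, ((i:ℝ)+s) ≠ 0 := fun i hi => by positivity
  have hprodne : ∏ i ∈ Finset.Icc 1 n, ((i:ℝ)+s) ≠ 0 := Finset.prod_ne_zero_iff.2 hne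
  rw [Real.GammaSeq, Finset.prod_div_distrib, h1, h2, h3]
  rw [h1] at hprodne
  field_simp

lemma st13_stolz {f b : ℕ → ℝ} {l : ℝ} (hb : ∀ n, b n < b (n+1)) (hb0 : ∀ n, 0 ≤ b n)
    (hbtop : Tendsto b atTop atTop)
    (h : Tendsto (fun n => f (n+1) / (b (n+1) - b n)) atTop (𝓝 l)) :
    Tendsto (fun n => (∑ k ∈ Finset.Icc 1 n, f k) / b n) atTop (𝓝 l) := by
  set S : ℕ → ℝ := fun n => ∑ k ∈ Finset.Icc 1 n, f k with hSdef
  rw [Metric.tendsto_atTop] at h ⊢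
  intro ε hε
  obtain ⟨N, hN⟩ := h (ε/2) (by positivity)
  have key : ∀ n, N ≤ n → |S n - S N - l * (b n - b N)| ≤ ε/2 * (b n - b N) := by
    intro n hn
    induction n, hn using Nat.le_induction with
    | base => simp
    | succ n hn ih =>
      have hd : 0 < b (n+1) - b n := sub_pos.2 (hb n)
      have h1 : |f (n+1) - l * (b (n+1) - b n)| ≤ ε/2 * (b (n+1) - b n) := by
        have h2 := hN n hn
        rw [Real.dist_eq] at h2
        have h3 : f (n+1) - l * (b (n+1) - b n)
            = (f (n+1) / (b (n+1) - b n) - l) * (b (n+1) - b n) := by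
          field_simp
        rw [h3, abs_mul, abs_of_pos hd]
        exact mul_le_mul (le_of_lt h2) le_rfl hd.le (by positivity)
      have hSsucc : S (n+1) = S n + f (n+1) := Finset.sum_Icc_succ_top (by omega) f
      calc |S (n+1) - S N - l*(b (n+1) - b N)|
          = |(S n - S N - l*(b n - b N)) + (f (n+1) - l*(b (n+1) - b n))| := by
            rw [hSsucc]; ring_nf
        _ ≤ |S n - S N - l*(b n - b N)| + |f (n+1) - l*(b (n+1) - b n)| := abs_add_le _ _
        _ ≤ ε/2*(b n - b N) + ε/2*(b (n+1) - b n) := add_le_add ih h1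
        _ = ε/2 * (b (n+1) - b N) := by ring
  set C := |S N - l * b N| with hC
  have hC0 : 0 ≤ C := abs_nonneg _
  obtain ⟨M, hM⟩ := eventually_atTop.1 (hbtop.eventually_ge_atTop (max 1 (C / (ε/2) + 1)))
  refine ⟨max N M, fun n hn => ?_⟩
  have hnN : N ≤ n := le_trans (le_max_left _ _) hn
  have hnM : M ≤ n := le_trans (le_max_right _ _) hn
  have hbn : max 1 (C / (ε/2) + 1) ≤ b n := hM n hnM
  have hbn1 : (1:ℝ) ≤ b n := le_trans (le_max_left _ _) hbn
  have hbnpos : 0 < b n := lt_of_lt_of_le one_pos hbn1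
  have hfrac : C / b n < ε/2 := by
    have h5 : C / (ε/2) + 1 ≤ b n := le_trans (le_max_right _ _) hbn
    rw [div_lt_iff₀ hbnpos]
    have h6 : C < (ε/2) * (C / (ε/2) + 1) := by
      rw [mul_add, mul_one, mul_div_cancel₀ _ (by positivity : (ε/2) ≠ 0)]
      linarith
    calc C < (ε/2) * (C / (ε/2) + 1) := h6
      _ ≤ ε/2 * b n := by nlinarith
  have hkey := key n hnN
  rw [Real.dist_eq]
  have h7 : S n / b n - l = (S n - l * b n) / b n := by field_simp
  rw [h7, abs_div, abs_of_pos hbnpos, div_lt_iff₀ hbnpos]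
  have h8 : |S n - l * b n| ≤ ε/2 * (b n - b N) + C := by
    calc |S n - l * b n| = |(S n - S N - l*(b n - b N)) + (S N - l * b N)| := by ring_nf
      _ ≤ |S n - S N - l*(b n - b N)| + C := abs_add_le _ _
      _ ≤ ε/2 * (b n - b N) + C := by linarith
  have h9 : ε/2 * (b n - b N) ≤ ε/2 * b n := by nlinarith [hb0 N]
  calc |S n - l * b n| ≤ ε/2 * (b n - b N) + C := h8
    _ ≤ ε/2 * b n + C := by linarith
    _ < ε/2 * b n + ε/2 * b n := by have := (div_lt_iff₀ hbnpos).1 hfrac; linarith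
    _ = ε * b n := by ring

lemma st13_rpow_incr {p : ℝ} (hp : 0 < p) :
    Tendsto (fun n : ℕ => (((n:ℝ)+1)^p - (n:ℝ)^p) / ((n:ℝ)+1)^(p-1)) atTop (𝓝 p) := by
  have hd : HasDerivAt (fun t : ℝ => (1 - t) ^ p) (-p) 0 := by
    have h1 : HasDerivAt (fun t : ℝ => 1 - t) (-1) 0 := (hasDerivAt_id 0).const_sub 1
    have h2 : HasDerivAt (fun u : ℝ => u ^ p) (p * (1:ℝ)^(p-1)) ((fun t : ℝ => 1 - t) 0) := by
      simpa using Real.hasDerivAt_rpow_const (x := ((1:ℝ) - 0)) (p := p) (Or.inl (by norm_num))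
    have := h2.comp 0 h1
    simp only [Real.one_rpow, mul_one, mul_neg_one] at this
    exact this
  rw [hasDerivAt_iff_tendsto_slope] at hd
  have ht : Tendsto (fun n : ℕ => (1:ℝ)/((n:ℝ)+1)) atTop (𝓝[≠] (0:ℝ)) := by
    refine tendsto_nhdsWithin_of_tendsto_nhds_of_eventually_within _
      tendsto_one_div_add_atTop_nhds_zero_nat ?_
    filter_upwards with n
    simp only [Set.mem_compl_iff, Set.mem_singleton_iff]
    positivity
  have hcomp := hd.comp ht
  have hneg : Tendsto (fun n : ℕ => -(slope (fun t : ℝ => (1 - t) ^ p) 0 ((1:ℝ)/((n:ℝ)+1))))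
      atTop (𝓝 p) := by simpa using hcomp.neg
  refine hneg.congr (fun n => ?_)
  have hn1 : (0:ℝ) < (n:ℝ)+1 := by positivity
  have hu : ((1:ℝ)/((n:ℝ)+1)) ≠ 0 := by positivity
  rw [slope_def_field]
  have h1 : (1:ℝ) - 1/((n:ℝ)+1) = (n:ℝ)/((n:ℝ)+1) := by field_simp; ring
  have h2 : ((n:ℝ)/((n:ℝ)+1)) ^ p = (n:ℝ)^p / ((n:ℝ)+1)^p :=
    Real.div_rpow (Nat.cast_nonneg n) hn1.le p
  have h3 : ((n:ℝ)+1)^(p-1) = ((n:ℝ)+1)^p / ((n:ℝ)+1) := by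
    rw [Real.rpow_sub hn1, Real.rpow_one]
  have hpow : ((n:ℝ)+1)^p ≠ 0 := (Real.rpow_pos_of_pos hn1 p).ne'
  rw [h1, h2, h3]
  field_simp
  ring_nf
  simp

lemma st13_stolz_rpow {e : ℕ → ℝ} {L p : ℝ} (hp : 0 < p)
    (h : Tendsto (fun k : ℕ => e k / (k:ℝ)^(p-1)) atTop (𝓝 L)) :
    Tendsto (fun n : ℕ => (∑ k ∈ Finset.Icc 1 n, e k) / (n:ℝ)^p) atTop (𝓝 (L/p)) := by
  have hb : ∀ n : ℕ, ((n:ℝ))^p < (((n+1:ℕ)):ℝ)^p := by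
    intro n
    push_cast
    exact Real.rpow_lt_rpow (Nat.cast_nonneg n) (by linarith [Nat.cast_nonneg (α := ℝ) n]) hp
  have hb0 : ∀ n : ℕ, 0 ≤ ((n:ℝ))^p := fun n => Real.rpow_nonneg (Nat.cast_nonneg n) p
  have hbtop : Tendsto (fun n : ℕ => ((n:ℝ))^p) atTop atTop :=
    (tendsto_rpow_atTop hp).comp tendsto_natCast_atTop_atTop
  refine st13_stolz hb hb0 hbtop ?_
  have h1 : Tendsto (fun n : ℕ => e (n+1) / (((n:ℝ)+1))^(p-1)) atTop (𝓝 L) := by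
    have := h.comp (tendsto_add_atTop_nat 1)
    refine this.congr (fun n => ?_)
    simp only [Function.comp_apply]
    push_cast
    ring_nf
  have h2 : Tendsto (fun n : ℕ => (((n:ℝ)+1)^(p-1)) / ((((n:ℝ)+1))^p - ((n:ℝ))^p))
      atTop (𝓝 (p⁻¹)) := by
    refine ((st13_rpow_incr hp).inv₀ hp.ne').congr (fun n => ?_)
    rw [inv_div]
  have key : ∀ (a b c : ℝ), b ≠ 0 → a/b * (b/c) = a/c := by
    intro a b c hb
    rcases eq_or_ne c 0 with rfl|hc
    · simp
    · field_simp
  rw [div_eq_mul_inv]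
  refine (h1.mul h2).congr (fun n => ?_)
  push_cast
  exact key _ _ _ (Real.rpow_pos_of_pos (by positivity) _).ne'

lemma st13_exp_integral {r c : ℝ} (hr : 0 < r) (hc : 0 ≤ c) :
    ∫ t, Real.exp (-c * t) ∂(expMeasure r) = r / (r + c) := by
  have hrc : 0 < r + c := by linarith
  have hmeas : Measurable (fun t : ℝ => (exponentialPDFReal r t).toNNReal) :=
    (measurable_exponentialPDFReal r).real_toNNReal
  have hdens : expMeasure r
      = volume.withDensity (fun t => ((exponentialPDFReal r t).toNNReal : ℝ≥0∞)) := rfl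
  rw [hdens, integral_withDensity_eq_integral_smul hmeas]
  have hptw : ∀ t : ℝ, (exponentialPDFReal r t).toNNReal • Real.exp (-c * t)
      = Set.indicator (Set.Ici (0:ℝ)) (fun t => r * Real.exp (-((r+c) * t))) t := by
    intro t
    rw [NNReal.smul_def, smul_eq_mul, Real.coe_toNNReal _ (exponentialPDFReal_nonneg hr t)]
    rw [exponentialPDFReal, gammaPDFReal]
    simp only [rpow_one, Real.Gamma_one, div_one, sub_self, rpow_zero, mul_one]
    by_cases ht : 0 ≤ t
    · rw [if_pos ht, Set.indicator_of_mem (Set.mem_Ici.2 ht)]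
      rw [mul_assoc, ← Real.exp_add]
      ring_nf
    · rw [if_neg ht, Set.indicator_of_notMem (by simpa using ht), zero_mul]
  rw [MeasureTheory.integral_congr_ae (Filter.Eventually.of_forall hptw)]
  rw [MeasureTheory.integral_indicator measurableSet_Ici, MeasureTheory.integral_Ici_eq_integral_Ioi]
  rw [MeasureTheory.integral_const_mul]
  have h1 : ∀ t ∈ Set.Ioi (0:ℝ), t ^ ((1:ℝ)-1) * Real.exp (-((r+c)*t)) = Real.exp (-((r+c)*t)) := by
    intro t ht
    rw [sub_self, Real.rpow_zero, one_mul]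
  rw [← MeasureTheory.setIntegral_congr_fun measurableSet_Ioi h1]
  rw [integral_rpow_mul_exp_neg_mul_Ioi one_pos hrc]
  rw [Real.rpow_one, Real.Gamma_one, mul_one]
  field_simp

lemma st13_integral_exp_weighted
    {Ω' : Type*} [MeasureSpace Ω'] [IsProbabilityMeasure (ℙ : Measure Ω')]
    (T' : ℕ → Ω' → ℝ) (hTm : ∀ i, Measurable (T' i))
    (hTi : iIndepFun T' ℙ)
    (n : ℕ) (hTe : ∀ i ∈ Finset.Icc 1 n, Measure.map (T' i) ℙ = expMeasure i)
    (c : ℕ → ℝ) (hc : ∀ i, 0 ≤ c i) :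
    ∫ ω, Real.exp (∑ i ∈ Finset.Icc 1 n, (-(c i)) * T' i ω) ∂ℙ
      = ∏ i ∈ Finset.Icc 1 n, (i:ℝ)/((i:ℝ) + c i) := by
  set X : ℕ → Ω' → ℝ := fun i => (fun r : ℝ => (-(c i)) * r) ∘ T' i with hX
  have hXm : ∀ i, Measurable (X i) := fun i => (measurable_const_mul _).comp (hTm i)
  have hXi : iIndepFun X ℙ :=
    hTi.comp (fun i => fun r : ℝ => (-(c i)) * r) (fun i => measurable_const_mul _)
  have hmgf := hXi.mgf_sum hXm (Finset.Icc 1 n) (t := 1)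
  have hLHS : ∫ ω, Real.exp (∑ i ∈ Finset.Icc 1 n, (-(c i)) * T' i ω) ∂ℙ
      = mgf (∑ i ∈ Finset.Icc 1 n, X i) ℙ 1 := by
    rw [mgf]
    congr 1
    funext ω
    simp [hX, Finset.sum_apply]
  rw [hLHS, hmgf]
  refine Finset.prod_congr rfl (fun i hi => ?_)
  have hi1 : 1 ≤ i := (Finset.mem_Icc.1 hi).1
  have hipos : (0:ℝ) < (i:ℝ) := by exact_mod_cast hi1
  have : mgf (X i) ℙ 1 = ∫ t, Real.exp ((-(c i)) * t) ∂(expMeasure i) := by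
    rw [mgf, ← hTe i hi, integral_map (hTm i).aemeasurable]
    · simp [hX]
    · exact (((measurable_id.const_mul _).exp).aestronglyMeasurable)
  rw [this]
  exact st13_exp_integral (r := (i:ℝ)) (c := c i) hipos (hc i)

lemma st13_expectation
    {Ω' : Type*} [MeasureSpace Ω'] [IsProbabilityMeasure (ℙ : Measure Ω')]
    (T' : ℕ → Ω' → ℝ) (K' : Ω' → ℕ) (n : ℕ) (hn : 2 ≤ n)
    (hTm : ∀ i, Measurable (T' i))
    (hTi : iIndepFun T' ℙ)
    (hTe : ∀ i ∈ Finset.Icc 1 n, Measure.map (T' i) ℙ = expMeasure i)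
    (hKm : Measurable K')
    (hKr : ∀ ω, K' ω ∈ Finset.Icc 1 (n-1))
    (hKi : IndepFun (fun ω (i : Fin n) => T' (i+1) ω) K' ℙ)
    {x y : ℝ} (hx : 0 < x) (hy : 0 < y) :
    ∫ ω, Real.exp (-x * ∑ i ∈ Finset.Icc 1 n, T' i ω
        - y * ∑ i ∈ Finset.Icc (K' ω + 1) n, T' i ω) ∂ℙ
      = ∑ k ∈ Finset.Icc 1 (n-1), (ℙ {ω | K' ω = k}).toReal *
          ((∏ i ∈ Finset.Icc 1 k, (i:ℝ)/((i:ℝ)+x)) *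
           (∏ i ∈ Finset.Icc (k+1) n, (i:ℝ)/((i:ℝ)+(x+y)))) := by
  classical
  set F : ℕ → Ω' → ℝ := fun k ω => Real.exp (-x * ∑ i ∈ Finset.Icc 1 n, T' i ω
      - y * ∑ i ∈ Finset.Icc (k+1) n, T' i ω) with hF
  have hSm : ∀ s : Finset ℕ, Measurable (fun ω => ∑ i ∈ s, T' i ω) :=
    fun s => Finset.measurable_sum s (fun i _ => hTm i)
  have hFm : ∀ k, Measurable (F k) := fun k =>
    Real.measurable_exp.comp (((hSm (Finset.Icc 1 n)).const_mul (-x)).sub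
      ((hSm (Finset.Icc (k+1) n)).const_mul y))
  -- a.e. nonnegativity of the T's
  have hT0 : ∀ᵐ ω ∂(ℙ : Measure Ω'), ∀ i ∈ Finset.Icc 1 n, 0 ≤ T' i ω := by
    rw [eventually_all_finset]
    intro i hi
    have hipos : (0:ℝ) < (i:ℝ) := by
      have := (Finset.mem_Icc.1 hi).1; exact_mod_cast this
    have h0 : (ℙ : Measure Ω') {ω | T' i ω < 0} = 0 := by
      have hpre : {ω | T' i ω < 0} = T' i ⁻¹' (Set.Iio 0) := rfl
      rw [hpre, ← Measure.map_apply (hTm i) measurableSet_Iio, hTe i hi]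
      show expMeasure (i:ℝ) (Set.Iio 0) = 0
      rw [expMeasure, gammaMeasure, withDensity_apply _ measurableSet_Iio]
      exact lintegral_exponentialPDF_of_nonpos le_rfl
    rw [ae_iff]
    convert h0 using 2
    ext ω
    simp [not_le]
  have hFbd : ∀ k, ∀ᵐ ω ∂(ℙ : Measure Ω'), ‖F k ω‖ ≤ 1 := by
    intro k
    filter_upwards [hT0] with ω hω
    have h1 : 0 ≤ ∑ i ∈ Finset.Icc 1 n, T' i ω := Finset.sum_nonneg (fun i hi => hω i hi)
    have h2 : 0 ≤ ∑ i ∈ Finset.Icc (k+1) n, T' i ω := Finset.sum_nonneg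
      (fun i hi => hω i (Finset.Icc_subset_Icc (by omega) le_rfl hi))
    rw [Real.norm_eq_abs, abs_of_pos (Real.exp_pos _), Real.exp_le_one_iff]
    nlinarith
  have hFint : ∀ k, Integrable (F k) (ℙ : Measure Ω') := fun k =>
    Integrable.mono' (integrable_const 1) (hFm k).aestronglyMeasurable (hFbd k)
  set φ : ℕ → ℕ → ℝ := fun k m => if m = k then 1 else 0 with hφ
  have hφm : ∀ k, Measurable (φ k) := fun k => Measurable.of_discrete
  -- step 1: pointwise decomposition
  have step1 : ∀ ω, F (K' ω) ω
      = ∑ k ∈ Finset.Icc 1 (n-1), φ k (K' ω) * F k ω := by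
    intro ω
    have : ∀ k, φ k (K' ω) * F k ω = if K' ω = k then F k ω else 0 := by
      intro k; simp only [hφ]; split_ifs <;> simp
    rw [Finset.sum_congr rfl (fun k _ => this k), Finset.sum_ite_eq]
    simp [hKr ω]
  -- step 2/3: integral of each piece
  have step3 : ∀ k ∈ Finset.Icc 1 (n-1),
      ∫ ω, φ k (K' ω) * F k ω ∂ℙ = (ℙ {ω | K' ω = k}).toReal * ∫ ω, F k ω ∂ℙ := by
    intro k _
    set Tvec : Ω' → (Fin n → ℝ) := fun ω i => T' (i+1) ω with hTvec
    have hTvm : Measurable Tvec := measurable_pi_lambda _ (fun i => hTm _)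
    set vv : (Fin n → ℝ) → ℕ → ℝ := fun v j => if h : j - 1 < n then v ⟨j-1, h⟩ else 0 with hvv
    have hvvm : ∀ j, Measurable (fun v => vv v j) := by
      intro j
      by_cases h : j - 1 < n
      · simpa [hvv, h] using measurable_pi_apply (⟨j-1, h⟩ : Fin n)
      · simpa [hvv, h] using measurable_const
    set G : (Fin n → ℝ) → ℝ := fun v => Real.exp (-x * ∑ i ∈ Finset.Icc 1 n, vv v i
        - y * ∑ i ∈ Finset.Icc (k+1) n, vv v i) with hG
    have hGm : Measurable G := Real.measurable_exp.comp
      (((Finset.measurable_sum _ (fun i _ => hvvm i)).const_mul (-x)).sub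
        ((Finset.measurable_sum _ (fun i _ => hvvm i)).const_mul y))
    have hFG : ∀ ω, F k ω = G (Tvec ω) := by
      intro ω
      simp only [hF, hG]
      congr 1
      have hsum : ∀ m : Finset ℕ, (∀ j ∈ m, 1 ≤ j ∧ j ≤ n) →
          ∑ i ∈ m, vv (Tvec ω) i = ∑ i ∈ m, T' i ω := by
        intro m hm
        refine Finset.sum_congr rfl (fun j hj => ?_)
        obtain ⟨hj1, hj2⟩ := hm j hj
        have hjn : j - 1 < n := by omega
        simp only [hvv, hTvec, dif_pos hjn]
        congr 1
        omega
      rw [hsum (Finset.Icc 1 n) (fun j hj => by exact_mod_cast Finset.mem_Icc.1 hj),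
        hsum (Finset.Icc (k+1) n) (fun j hj => by
          have := Finset.mem_Icc.1 hj; omega)]
    have hIndep : IndepFun (fun ω => φ k (K' ω)) (fun ω => G (Tvec ω)) ℙ :=
      (hKi.comp hGm (hφm k)).symm
    have hint1 : Integrable (fun ω => φ k (K' ω)) (ℙ : Measure Ω') := by
      refine Integrable.mono' (integrable_const 1)
        ((hφm k).comp hKm).aestronglyMeasurable ?_
      filter_upwards with ω
      simp only [hφ]
      split_ifs <;> simp
    have hint2 : Integrable (fun ω => G (Tvec ω)) (ℙ : Measure Ω') := by
      refine (hFint k).congr ?_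
      filter_upwards with ω
      exact hFG ω
    have := hIndep.integral_mul_eq_mul_integral hint1.aestronglyMeasurable hint2.aestronglyMeasurable
    have heq : ∫ ω, φ k (K' ω) * F k ω ∂ℙ = ∫ ω, φ k (K' ω) * G (Tvec ω) ∂ℙ := by
      refine integral_congr_ae ?_
      filter_upwards with ω
      rw [hFG ω]
    rw [heq, show (∫ ω, φ k (K' ω) * G (Tvec ω) ∂ℙ)
      = (∫ ω, φ k (K' ω) ∂ℙ) * ∫ ω, G (Tvec ω) ∂ℙ from this]
    congr 1
    · -- ∫ φ k ∘ K' = measure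
      have hind : (fun ω => φ k (K' ω))
          = Set.indicator (K' ⁻¹' {k}) (fun _ => (1:ℝ)) := by
        funext ω
        simp [hφ, Set.indicator_apply]
      rw [hind, integral_indicator_const (1:ℝ) (hKm (measurableSet_singleton k))]
      simp only [smul_eq_mul, mul_one]
      rfl
    · -- ∫ G ∘ Tvec = ∫ F k
      refine integral_congr_ae ?_
      filter_upwards with ω
      rw [hFG ω]
  -- step 4: compute ∫ F k
  have step4 : ∀ k ∈ Finset.Icc 1 (n-1), ∫ ω, F k ω ∂ℙ
      = (∏ i ∈ Finset.Icc 1 k, (i:ℝ)/((i:ℝ)+x)) *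
        (∏ i ∈ Finset.Icc (k+1) n, (i:ℝ)/((i:ℝ)+(x+y))) := by
    intro k hk
    have hkn : k ≤ n := by have := (Finset.mem_Icc.1 hk).2; omega
    set c : ℕ → ℝ := fun i => x + (if k+1 ≤ i then y else 0) with hc
    have hc0 : ∀ i, 0 ≤ c i := by
      intro i; simp only [hc]; split_ifs <;> linarith
    have hexp : ∀ ω, F k ω = Real.exp (∑ i ∈ Finset.Icc 1 n, (-(c i)) * T' i ω) := by
      intro ω
      simp only [hF]
      congr 1
      have h1 : ∀ i, (-(c i)) * T' i ω
          = (-x) * T' i ω + (if k+1 ≤ i then (-y) * T' i ω else 0) := by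
        intro i; simp only [hc]; split_ifs <;> ring
      rw [Finset.sum_congr rfl (fun i _ => h1 i), Finset.sum_add_distrib,
        ← Finset.sum_filter]
      have hfil : Finset.filter (fun i => k+1 ≤ i) (Finset.Icc 1 n)
          = Finset.Icc (k+1) n := by
        ext a
        simp only [Finset.mem_filter, Finset.mem_Icc]
        omega
      rw [hfil, ← Finset.mul_sum, ← Finset.mul_sum]
      ring
    rw [integral_congr_ae (Filter.Eventually.of_forall hexp)]
    rw [st13_integral_exp_weighted T' hTm hTi n hTe c hc0]
    have e1 : Finset.Icc 1 n = Finset.Ioc 0 n := by ext a; simp [Finset.mem_Icc, Finset.mem_Ioc]; omega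
    have e2 : Finset.Icc 1 k = Finset.Ioc 0 k := by ext a; simp [Finset.mem_Icc, Finset.mem_Ioc]; omega
    have e3 : Finset.Icc (k+1) n = Finset.Ioc k n := by ext a; simp [Finset.mem_Icc, Finset.mem_Ioc]
    rw [e1, e2, e3, ← Finset.prod_Ioc_consecutive _ (Nat.zero_le k) hkn]
    congr 1
    · refine Finset.prod_congr rfl (fun i hi => ?_)
      have : ¬ (k+1 ≤ i) := by have := (Finset.mem_Ioc.1 hi).2; omega
      simp [hc, this, show ¬ k < i by omega]
    · refine Finset.prod_congr rfl (fun i hi => ?_)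
      have : k+1 ≤ i := by have := (Finset.mem_Ioc.1 hi).1; omega
      simp [hc, this, show k < i by omega]
  -- assemble
  calc ∫ ω, Real.exp (-x * ∑ i ∈ Finset.Icc 1 n, T' i ω
        - y * ∑ i ∈ Finset.Icc (K' ω + 1) n, T' i ω) ∂ℙ
      = ∫ ω, ∑ k ∈ Finset.Icc 1 (n-1), φ k (K' ω) * F k ω ∂ℙ := by
        exact integral_congr_ae (Filter.Eventually.of_forall (fun ω => step1 ω))
    _ = ∑ k ∈ Finset.Icc 1 (n-1), ∫ ω, φ k (K' ω) * F k ω ∂ℙ := by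
        refine integral_finset_sum _ (fun k _ => ?_)
        refine Integrable.bdd_mul (hFint k)
          (((hφm k).comp hKm).aestronglyMeasurable) (c := 1) (Filter.Eventually.of_forall fun ω => ?_)
        simp only [hφ]
        split_ifs <;> simp
    _ = ∑ k ∈ Finset.Icc 1 (n-1), (ℙ {ω | K' ω = k}).toReal *
          ((∏ i ∈ Finset.Icc 1 k, (i:ℝ)/((i:ℝ)+x)) *
           (∏ i ∈ Finset.Icc (k+1) n, (i:ℝ)/((i:ℝ)+(x+y)))) := by
        refine Finset.sum_congr rfl (fun k hk => ?_)
        rw [step3 k hk, step4 k hk]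

lemma st13_div_mul_div (a b c : ℝ) (hb : b ≠ 0) : a/b * (b/c) = a/c := by
  rcases eq_or_ne c 0 with rfl|hc
  · simp
  · field_simp

/-- For each `n ≥ 2` let `T_1, …, T_n` be independent exponentials of rates
`1, …, n` and `K` an independent index with
`P(K = k) = 2(n+1)/((n−1)(k+2)(k+1))` on `{1, …, n−1}`; set
`U_n = T_1 + … + T_n` and `τ⁽ⁿ⁾ = T_{K+1} + … + T_n`.  Then for all `x > 0`
and `y > 1`, `n^{x+1} · E[e^{−x·U_n − y·τ⁽ⁿ⁾}] → 2Γ(x+1)/(y−1)` as `n → ∞`. -/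
theorem statement13
    (Ω : ℕ → Type*) [∀ n, MeasureSpace (Ω n)]
    [∀ n, IsProbabilityMeasure (ℙ : Measure (Ω n))]
    (T : ∀ n, ℕ → Ω n → ℝ) (K : ∀ n, Ω n → ℕ)
    (hTmeas : ∀ n i, Measurable (T n i))
    (hTindep : ∀ n, iIndepFun (T n) ℙ)
    (hTexp : ∀ n, ∀ i ∈ Finset.Icc 1 n, Measure.map (T n i) ℙ = expMeasure i)
    (hKmeas : ∀ n, Measurable (K n))
    (hKrange : ∀ n, 2 ≤ n → ∀ ω, K n ω ∈ Finset.Icc 1 (n - 1))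
    (hKindep : ∀ n, IndepFun (fun ω (i : Fin n) => T n (i + 1) ω) (K n) ℙ)
    (hKdist : ∀ n, 2 ≤ n → ∀ k ∈ Finset.Icc 1 (n - 1),
      ℙ {ω | K n ω = k} = ENNReal.ofReal
        (2 * ((n : ℝ) + 1) / (((n : ℝ) - 1) * ((k : ℝ) + 2) * ((k : ℝ) + 1))))
    (x y : ℝ) (hx : 0 < x) (hy : 1 < y) :
    Tendsto (fun n : ℕ =>
        (n : ℝ) ^ (x + 1) *
          ∫ ω, Real.exp (-x * ∑ i ∈ Finset.Icc 1 n, T n i ω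
              - y * ∑ i ∈ Finset.Icc (K n ω + 1) n, T n i ω) ∂ℙ)
      atTop (nhds (2 * Real.Gamma (x + 1) / (y - 1))) := by
  have hy0 : (0:ℝ) < y := by linarith
  have hy1 : (0:ℝ) < y - 1 := by linarith
  obtain ⟨A, hA⟩ : ∃ A : ℕ → ℝ, A = fun m : ℕ => ∏ i ∈ Finset.Icc 1 m, (i:ℝ)/((i:ℝ)+x) := ⟨_, rfl⟩
  obtain ⟨Q, hQ⟩ : ∃ Q : ℕ → ℝ, Q = fun m : ℕ => ∏ i ∈ Finset.Icc 1 m, (i:ℝ)/((i:ℝ)+(x+y)) := ⟨_, rfl⟩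
  obtain ⟨e, he⟩ : ∃ e : ℕ → ℝ, e = fun k => A k / (Q k * ((k:ℝ)+2) * ((k:ℝ)+1)) := ⟨_, rfl⟩
  obtain ⟨L, hL⟩ : ∃ L : ℝ, L = Real.Gamma (x+1) / Real.Gamma (x+y+1) := ⟨_, rfl⟩
  have hΓpos : 0 < Real.Gamma (x+y+1) := Real.Gamma_pos_of_pos (by linarith)
  have hQpos : ∀ m, 0 < Q m := by
    intro m
    rw [hQ]
    refine Finset.prod_pos (fun i hi => ?_)
    have h1 : 1 ≤ i := (Finset.mem_Icc.1 hi).1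
    have : (0:ℝ) < (i:ℝ) := by exact_mod_cast h1
    positivity
  have hAten : Tendsto (fun m : ℕ => (m:ℝ)^x * A m) atTop (𝓝 (Real.Gamma (x+1))) := by
    rw [hA]; exact st13_prod_tendsto hx
  have hQten : Tendsto (fun m : ℕ => (m:ℝ)^(x+y) * Q m) atTop (𝓝 (Real.Gamma (x+y+1))) := by
    rw [hQ]; exact st13_prod_tendsto (by linarith)
  -- limit of e k / k^(y-2)
  have heten : Tendsto (fun k : ℕ => e k / (k:ℝ)^(y-1-1)) atTop (𝓝 L) := by
    rw [hL]
    have hw : Tendsto (fun k : ℕ => ((k:ℝ)*(k:ℝ))/(((k:ℝ)+2)*((k:ℝ)+1))) atTop (𝓝 1) := by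
      have h2 := tendsto_natCast_div_add_atTop (𝕜 := ℝ) (2:ℝ)
      have h1 := tendsto_natCast_div_add_atTop (𝕜 := ℝ) (1:ℝ)
      have := h2.mul h1
      rw [mul_one] at this
      refine this.congr (fun k => ?_)
      rw [div_mul_div_comm]
    have hmain := (hAten.div hQten hΓpos.ne').mul hw
    rw [mul_one] at hmain
    refine hmain.congr' ?_
    filter_upwards [eventually_ge_atTop 1] with k hk
    have hk0 : (0:ℝ) < (k:ℝ) := by exact_mod_cast hk
    have hpow2 : (k:ℝ)^(((2:ℕ):ℝ)) = (k:ℝ)*(k:ℝ) := by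
      rw [Real.rpow_natCast]; ring
    have hxy : (k:ℝ)^(x+y) = (k:ℝ)^x * (k:ℝ)^(y-1-1) * ((k:ℝ)*(k:ℝ)) := by
      rw [← hpow2, ← Real.rpow_add hk0, ← Real.rpow_add hk0]
      congr 1
      push_cast
      ring
    have hkx : (k:ℝ)^x ≠ 0 := (Real.rpow_pos_of_pos hk0 _).ne'
    have hky : (k:ℝ)^(y-1-1) ≠ 0 := (Real.rpow_pos_of_pos hk0 _).ne'
    have hQk : Q k ≠ 0 := (hQpos k).ne'
    have hk2 : ((k:ℝ)+2) ≠ 0 := by positivity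
    have hk1 : ((k:ℝ)+1) ≠ 0 := by positivity
    simp only [he, Pi.div_apply]
    rw [hxy]
    field_simp
  -- Stolz and shift
  have hstolz := st13_stolz_rpow (p := y-1) hy1 heten
  have hshift : Tendsto (fun m : ℕ => ((m:ℝ)^(y-1)) / (((m:ℝ)+1)^(y-1))) atTop (𝓝 1) := by
    have hb := tendsto_natCast_div_add_atTop (𝕜 := ℝ) (1:ℝ)
    have := hb.rpow_const (p := y-1) (Or.inl one_ne_zero)
    rw [Real.one_rpow] at this
    refine this.congr (fun m => ?_)
    exact Real.div_rpow (Nat.cast_nonneg m) (by positivity) _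
  have hg : Tendsto (fun m : ℕ => (∑ k ∈ Finset.Icc 1 m, e k)/(((m:ℝ)+1)^(y-1)))
      atTop (𝓝 (L/(y-1))) := by
    have := hstolz.mul hshift
    rw [mul_one] at this
    refine this.congr' ?_
    filter_upwards [eventually_ge_atTop 1] with m hm
    have hm0 : (0:ℝ) < (m:ℝ) := by exact_mod_cast hm
    exact st13_div_mul_div _ _ _ (Real.rpow_pos_of_pos hm0 _).ne'
  have ht3 : Tendsto (fun n : ℕ => (∑ k ∈ Finset.Icc 1 (n-1), e k) / (n:ℝ)^(y-1))
      atTop (𝓝 (L/(y-1))) := by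
    have := hg.comp (tendsto_sub_atTop_nat 1)
    refine this.congr' ?_
    filter_upwards [eventually_ge_atTop 1] with n hn
    simp only [Function.comp_apply]
    congr 2
    rw [Nat.cast_sub hn]
    push_cast
    ring
  -- t1
  have ht1 : Tendsto (fun n : ℕ => 2*((n:ℝ)+1)/((n:ℝ)-1)) atTop (𝓝 2) := by
    have hbase : Tendsto (fun n:ℕ => ((n:ℝ)-1)) atTop atTop := by
      have := tendsto_atTop_add_const_right atTop (-1:ℝ) tendsto_natCast_atTop_atTop
      refine this.congr (fun n => ?_)
      ring
    have hinv : Tendsto (fun n:ℕ => 4/((n:ℝ)-1)) atTop (𝓝 0) :=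
      Tendsto.div_atTop tendsto_const_nhds hbase
    have := tendsto_const_nhds (x := (2:ℝ)) (f := atTop (α := ℕ)) |>.add hinv
    rw [add_zero] at this
    refine this.congr' ?_
    filter_upwards [eventually_ge_atTop 2] with n hn
    have hn1 : ((n:ℝ)-1) ≠ 0 := by
      have : (2:ℝ) ≤ (n:ℝ) := by exact_mod_cast hn
      nlinarith
    field_simp
    ring
  -- total limit
  have htot := (ht1.mul hQten).mul ht3
  have hlim : (2 * Real.Gamma (x+y+1)) * (L/(y-1)) = 2 * Real.Gamma (x+1) / (y-1) := by
    rw [hL]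
    field_simp
  rw [← hlim]
  refine htot.congr' ?_
  filter_upwards [eventually_ge_atTop 2] with n hn
  have hnR : (2:ℝ) ≤ (n:ℝ) := by exact_mod_cast hn
  have hn0 : (0:ℝ) < (n:ℝ) := by linarith
  have hn1 : ((n:ℝ)-1) ≠ 0 := by nlinarith
  -- expectation identity
  have hexp := st13_expectation (T n) (K n) n hn (hTmeas n) (hTindep n) (hTexp n)
    (hKmeas n) (hKrange n hn) (hKindep n) hx hy0
  -- rewrite each summand
  have hsum : ∑ k ∈ Finset.Icc 1 (n-1), ((ℙ : Measure (Ω n)) {ω | K n ω = k}).toReal *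
          ((∏ i ∈ Finset.Icc 1 k, (i:ℝ)/((i:ℝ)+x)) *
           (∏ i ∈ Finset.Icc (k+1) n, (i:ℝ)/((i:ℝ)+(x+y))))
      = (2*((n:ℝ)+1)/((n:ℝ)-1)) * Q n * ∑ k ∈ Finset.Icc 1 (n-1), e k := by
    rw [Finset.mul_sum]
    refine Finset.sum_congr rfl (fun k hk => ?_)
    obtain ⟨hk1, hk2⟩ := Finset.mem_Icc.1 hk
    have hkn : k ≤ n := by omega
    have hkR : (1:ℝ) ≤ (k:ℝ) := by exact_mod_cast hk1
    -- probability value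
    have hprob : ((ℙ : Measure (Ω n)) {ω | K n ω = k}).toReal
        = 2 * ((n:ℝ)+1) / (((n:ℝ)-1) * ((k:ℝ)+2) * ((k:ℝ)+1)) := by
      rw [hKdist n hn k hk, ENNReal.toReal_ofReal]
      have h1 : (0:ℝ) < (n:ℝ) - 1 := by linarith
      positivity
    -- tail product
    have htail : ∏ i ∈ Finset.Icc (k+1) n, (i:ℝ)/((i:ℝ)+(x+y)) = Q n / Q k := by
      have e1 : Finset.Icc 1 n = Finset.Ioc 0 n := by
        ext a; simp [Finset.mem_Icc, Finset.mem_Ioc]; omega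
      have e2 : Finset.Icc 1 k = Finset.Ioc 0 k := by
        ext a; simp [Finset.mem_Icc, Finset.mem_Ioc]; omega
      have e3 : Finset.Icc (k+1) n = Finset.Ioc k n := by
        ext a; simp [Finset.mem_Icc, Finset.mem_Ioc]
      have hsplit : Q k * ∏ i ∈ Finset.Ioc k n, (i:ℝ)/((i:ℝ)+(x+y)) = Q n := by
        simp only [hQ]
        rw [e1, e2]
        exact Finset.prod_Ioc_consecutive _ (Nat.zero_le k) hkn
      rw [e3, eq_div_iff (hQpos k).ne', mul_comm]
      exact hsplit
    have hAk : (∏ i ∈ Finset.Icc 1 k, (i:ℝ)/((i:ℝ)+x)) = A k := by rw [hA]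
    rw [hprob, htail, hAk]
    simp only [he]
    have hQk : Q k ≠ 0 := (hQpos k).ne'
    have hc2 : ((k:ℝ)+2) ≠ 0 := by positivity
    have hc1 : ((k:ℝ)+1) ≠ 0 := by positivity
    field_simp
  rw [hexp, hsum]
  -- scalar juggling with rpow
  have hpow : (n:ℝ)^(x+y) = (n:ℝ)^(x+1) * (n:ℝ)^(y-1) := by
    rw [← Real.rpow_add hn0]
    ring_nf
  have hyne : ((n:ℝ)^(y-1)) ≠ 0 := (Real.rpow_pos_of_pos hn0 _).ne'
  rw [hpow]
  field_simp
end

section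
/- Let E_1, …, E_n be independent, identically distributed exponential random variables with rate 1. Then ∑_{i=1}^n E_i/i has the same distribution as max(E_1, …, E_n); equivalently, for every real t ≥ 0, P(∑_{i=1}^n E_i/i ≤ t) = (1 − e^{−t})^n. -/
open scoped ENNReal
open MeasureTheory ProbabilityTheory Real Set

lemma expMeasure_apply_Iio_zero {r : ℝ} : expMeasure r (Iio 0) = 0 := by
  rw [show expMeasure r = volume.withDensity (exponentialPDF r) from rfl,
    withDensity_apply _ measurableSet_Iio]
  exact lintegral_exponentialPDF_of_nonpos le_rfl

lemma hasDerivAt_key (m : ℕ) (t u : ℝ) :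
    HasDerivAt (fun u : ℝ => -(exp (-(u / ((m : ℝ) + 1))) - exp (-t)) ^ (m + 1))
      (exp (-u) * (1 - exp (-(t - u / ((m : ℝ) + 1)))) ^ m) u := by
  set c : ℝ := (m : ℝ) + 1 with hc_def
  have hc : (0:ℝ) < c := by positivity
  have h1 : HasDerivAt (fun u : ℝ => -(u / c)) (-(1 / c)) u := by
    simpa using ((hasDerivAt_id u).div_const c).fun_neg
  have h2 : HasDerivAt (fun u : ℝ => exp (-(u / c))) (exp (-(u / c)) * (-(1 / c))) u := h1.exp
  have h3 := ((h2.sub_const (exp (-t))).fun_pow (m + 1)).fun_neg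
  refine h3.congr_deriv (Eq.symm ?_)
  have hprod : exp (-(u / c)) * exp (u / c) = 1 := by
    rw [← exp_add]; simp
  have e1 : exp (-u) = exp (-(u / c)) ^ (m + 1) := by
    rw [← exp_nat_mul]
    congr 1
    push_cast [hc_def]
    field_simp
  have e2 : exp (-(t - u / c)) = exp (u / c) * exp (-t) := by
    rw [← exp_add]; ring_nf
  have e3 : exp (-(u / c)) - exp (-t) = exp (-(u / c)) * (1 - exp (u / c) * exp (-t)) := by
    rw [mul_sub, mul_one, ← mul_assoc, hprod, one_mul]
  have hcast : ((m + 1 : ℕ) : ℝ) = c := by push_cast [hc_def]; ring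
  rw [Nat.add_sub_cancel, e1, e2, e3, mul_pow, hcast]
  have hc' : c ≠ 0 := ne_of_gt hc
  field_simp
  ring


lemma integral_key (m : ℕ) (t : ℝ) :
    ∫ u in (0:ℝ)..((m : ℝ) + 1) * t, exp (-u) * (1 - exp (-(t - u / ((m : ℝ) + 1)))) ^ m
      = (1 - exp (-t)) ^ (m + 1) := by
  have hcont : Continuous fun u : ℝ => exp (-u) * (1 - exp (-(t - u / ((m : ℝ) + 1)))) ^ m := by
    continuity
  rw [intervalIntegral.integral_eq_sub_of_hasDerivAt
    (fun u _ => hasDerivAt_key m t u) (hcont.intervalIntegrable _ _)]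
  have hc : ((m : ℝ) + 1) ≠ 0 := by positivity
  rw [mul_comm ((m : ℝ) + 1) t, mul_div_assoc, div_self hc, mul_one]
  simp [sub_self, zero_pow (Nat.succ_ne_zero m)]

lemma lint_key (m : ℕ) (t : ℝ) (ht : 0 ≤ t) :
    ∫⁻ u, exponentialPDF 1 u *
        ENNReal.ofReal (if 0 ≤ t - u / ((m : ℝ) + 1)
          then (1 - exp (-(t - u / ((m : ℝ) + 1)))) ^ m else 0)
      = ENNReal.ofReal ((1 - exp (-t)) ^ (m + 1)) := by
  set c : ℝ := (m : ℝ) + 1 with hc_def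
  have hc : (0:ℝ) < c := by positivity
  set a : ℝ := c * t with ha_def
  have ha : 0 ≤ a := by positivity
  set f : ℝ → ℝ≥0∞ := fun u => exponentialPDF 1 u *
      ENNReal.ofReal (if 0 ≤ t - u / c then (1 - exp (-(t - u / c))) ^ m else 0) with hf_def
  have hind : ∀ u, f u = (Icc 0 a).indicator f u := by
    intro u
    by_cases hu : u ∈ Icc 0 a
    · rw [indicator_of_mem hu]
    · rw [indicator_of_notMem hu]
      rw [mem_Icc, not_and_or] at hu
      rcases hu with hu | hu
      · rw [hf_def]
        simp only []
        rw [exponentialPDF_of_neg (lt_of_not_ge hu), zero_mul]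
      · have hu' : a < u := lt_of_not_ge hu
        have : ¬ (0 ≤ t - u / c) := by
          rw [not_le, sub_neg]
          rw [ha_def] at hu'
          rw [lt_div_iff₀ hc]
          linarith
        rw [hf_def]
        simp only [if_neg this, ENNReal.ofReal_zero, mul_zero]
  calc ∫⁻ u, f u = ∫⁻ u, (Icc 0 a).indicator f u := lintegral_congr hind
    _ = ∫⁻ u in Icc 0 a, f u := lintegral_indicator measurableSet_Icc f
    _ = ∫⁻ u in Icc 0 a, ENNReal.ofReal (exp (-u) * (1 - exp (-(t - u / c))) ^ m) := by
        apply setLIntegral_congr_fun measurableSet_Icc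
        intro u hu
        rw [mem_Icc] at hu
        have h1 : 0 ≤ t - u / c := by
          rw [sub_nonneg, div_le_iff₀ hc]
          rw [ha_def] at hu
          linarith [hu.2]
        rw [hf_def]
        simp only [if_pos h1]
        rw [exponentialPDF_of_nonneg hu.1, one_mul, one_mul,
          ← ENNReal.ofReal_mul (exp_nonneg _)]
    _ = ENNReal.ofReal (∫ u in Icc 0 a, exp (-u) * (1 - exp (-(t - u / c))) ^ m) := by
        have hcont : Continuous fun u : ℝ => exp (-u) * (1 - exp (-(t - u / c))) ^ m :=
          (Real.continuous_exp.comp continuous_neg).mul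
            ((continuous_const.sub (Real.continuous_exp.comp
              ((continuous_const.sub (continuous_id.div_const c)).neg))).pow m)
        rw [← ofReal_integral_eq_lintegral_ofReal]
        · exact hcont.integrableOn_Icc
        · refine (ae_restrict_iff' measurableSet_Icc).2 (ae_of_all _ fun u hu => ?_)
          simp only [Pi.zero_apply]
          rw [mem_Icc] at hu
          have h1 : 0 ≤ t - u / c := by
            rw [sub_nonneg, div_le_iff₀ hc]
            rw [ha_def] at hu
            linarith [hu.2]
          have h2 : exp (-(t - u / c)) ≤ 1 := exp_le_one_iff.2 (by linarith)
          exact mul_nonneg (exp_nonneg _) (pow_nonneg (by linarith) m)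
    _ = ENNReal.ofReal ((1 - exp (-t)) ^ (m + 1)) := by
        rw [integral_Icc_eq_integral_Ioc, ← intervalIntegral.integral_of_le ha,
          integral_key m t]

lemma key_lemma {Ω : Type*} [MeasureSpace Ω] [IsProbabilityMeasure (ℙ : Measure Ω)]
    (E : ℕ → Ω → ℝ) (hEmeas : ∀ i, Measurable (E i))
    (hEindep : iIndepFun E ℙ) :
    ∀ n : ℕ, (∀ i, 1 ≤ i → i ≤ n → Measure.map (E i) ℙ = expMeasure 1) →
      ∀ t : ℝ, 0 ≤ t →
      ℙ {ω | ∑ i ∈ Finset.Icc 1 n, E i ω / (i : ℝ) ≤ t}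
        = ENNReal.ofReal ((1 - Real.exp (-t)) ^ n) := by
  intro n
  induction n with
  | zero =>
    intro _ t ht
    rw [show Finset.Icc 1 0 = (∅ : Finset ℕ) from Finset.Icc_eq_empty (by omega)]
    simp only [Finset.sum_empty, pow_zero, ENNReal.ofReal_one]
    rw [show {ω : Ω | (0:ℝ) ≤ t} = univ from eq_univ_of_forall fun _ => ht]
    exact measure_univ
  | succ n ih =>
    intro hEexp t ht
    set F : ℕ → Ω → ℝ := fun i ω => E i ω / (i : ℝ) with hF_def
    have hFmeas : ∀ i, Measurable (F i) := fun i => (hEmeas i).div_const _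
    have hFindep : iIndepFun F ℙ :=
      hEindep.comp (fun i x => x / (i : ℝ)) (fun i => measurable_id.div_const _)
    set X : Ω → ℝ := fun ω => ∑ i ∈ Finset.Icc 1 n, F i ω with hX_def
    have hXmeas : Measurable X := Finset.measurable_sum _ fun i _ => hFmeas i
    set Y : Ω → ℝ := F (n + 1) with hY_def
    have hYmeas : Measurable Y := hFmeas (n + 1)
    have hnot : (n + 1) ∉ Finset.Icc 1 n := by simp
    have hXeq : (∑ i ∈ Finset.Icc 1 n, F i) = X := by
      ext ω; simp [Finset.sum_apply]; rfl
    have hindep : IndepFun Y X ℙ := by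
      rw [← hXeq]
      exact (hFindep.indepFun_finsetSum_of_notMem hFmeas hnot).symm
    haveI : IsProbabilityMeasure (Measure.map X ℙ) := Measure.isProbabilityMeasure_map hXmeas.aemeasurable
    haveI : IsProbabilityMeasure (Measure.map Y ℙ) := Measure.isProbabilityMeasure_map hYmeas.aemeasurable
    -- the set
    have hset : {ω : Ω | ∑ i ∈ Finset.Icc 1 (n + 1), E i ω / (i : ℝ) ≤ t}
        = (fun ω => (Y ω, X ω)) ⁻¹' {p : ℝ × ℝ | p.2 + p.1 ≤ t} := by
      ext ω
      simp only [mem_setOf_eq, mem_preimage]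
      rw [Finset.sum_Icc_succ_top (by omega : 1 ≤ n + 1)]
    have hS : MeasurableSet {p : ℝ × ℝ | p.2 + p.1 ≤ t} :=
      measurableSet_le (measurable_snd.add measurable_fst) measurable_const
    -- CDF of X
    have hcdfX : ∀ s : ℝ, (Measure.map X ℙ) (Iic s)
        = ENNReal.ofReal (if 0 ≤ s then (1 - exp (-s)) ^ n else 0) := by
      intro s
      rw [Measure.map_apply hXmeas measurableSet_Iic]
      by_cases hs : 0 ≤ s
      · rw [if_pos hs]
        exact ih (fun i h1 h2 => hEexp i h1 (by omega)) s hs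
      · rw [if_neg hs, ENNReal.ofReal_zero]
        push_neg at hs
        have hEnn : ∀ i ∈ Finset.Icc 1 n, ∀ᵐ ω ∂ℙ, 0 ≤ E i ω := by
          intro i hi
          rw [Finset.mem_Icc] at hi
          have hmap := hEexp i hi.1 (by omega)
          rw [ae_iff, show {ω | ¬ 0 ≤ E i ω} = E i ⁻¹' Iio 0 from by ext ω; simp [not_le],
            ← Measure.map_apply (hEmeas i) measurableSet_Iio, hmap, expMeasure_apply_Iio_zero]
        have hae : ∀ᵐ ω ∂ℙ, 0 ≤ X ω := by
          filter_upwards [(Filter.eventually_all_finset (Finset.Icc 1 n)).2 hEnn] with ω hω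
          exact Finset.sum_nonneg fun i hi => div_nonneg (hω i hi) (Nat.cast_nonneg i)
        refine le_antisymm ?_ zero_le
        calc ℙ (X ⁻¹' Iic s) ≤ ℙ {ω | ¬ 0 ≤ X ω} :=
              measure_mono fun ω h => by
                simp only [mem_setOf_eq, not_le]
                exact lt_of_le_of_lt h hs
          _ = 0 := ae_iff.1 hae
    -- measurable integrand
    have hgmeas : Measurable fun y : ℝ =>
        ENNReal.ofReal (if 0 ≤ t - y then (1 - exp (-(t - y))) ^ n else 0) := by
      refine ENNReal.measurable_ofReal.comp (Measurable.ite ?_ ?_ measurable_const)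
      · exact measurableSet_le measurable_const (measurable_const.sub measurable_id)
      · exact ((continuous_const.sub (Real.continuous_exp.comp
          (continuous_const.sub continuous_id).neg)).pow n).measurable
    -- main computation
    rw [hset, ← Measure.map_apply (hYmeas.prodMk hXmeas) hS,
      (indepFun_iff_map_prod_eq_prod_map_map hYmeas.aemeasurable hXmeas.aemeasurable).1 hindep,
      Measure.prod_apply hS]
    have hfiber : ∀ y : ℝ, (Prod.mk y ⁻¹' {p : ℝ × ℝ | p.2 + p.1 ≤ t}) = Iic (t - y) := by
      intro y
      ext x
      simp only [mem_preimage, mem_setOf_eq, mem_Iic]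
      constructor <;> intro <;> linarith
    calc ∫⁻ y, (Measure.map X ℙ) (Prod.mk y ⁻¹' {p : ℝ × ℝ | p.2 + p.1 ≤ t}) ∂(Measure.map Y ℙ)
        = ∫⁻ y, ENNReal.ofReal (if 0 ≤ t - y then (1 - exp (-(t - y))) ^ n else 0) ∂(Measure.map Y ℙ) := by
          refine lintegral_congr fun y => ?_
          rw [hfiber y, hcdfX (t - y)]
      _ = ∫⁻ u, ENNReal.ofReal (if 0 ≤ t - u / ((n : ℝ) + 1)
            then (1 - exp (-(t - u / ((n : ℝ) + 1)))) ^ n else 0) ∂(expMeasure 1) := by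
          have hYmap : Measure.map Y ℙ
              = Measure.map (fun x : ℝ => x / (((n + 1 : ℕ)) : ℝ)) (expMeasure 1) := by
            rw [← hEexp (n + 1) (by omega) le_rfl,
              Measure.map_map (g := fun x : ℝ => x / (((n + 1 : ℕ)) : ℝ))
                (measurable_id.div_const _) (hEmeas (n + 1))]
            rfl
          have hdiv : Measurable fun x : ℝ => x / (((n + 1 : ℕ)) : ℝ) :=
            measurable_id.div_const _
          rw [hYmap, lintegral_map hgmeas hdiv]
          refine lintegral_congr fun u => ?_
          push_cast
          rfl
      _ = ∫⁻ u, exponentialPDF 1 u * ENNReal.ofReal (if 0 ≤ t - u / ((n : ℝ) + 1)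
            then (1 - exp (-(t - u / ((n : ℝ) + 1)))) ^ n else 0) := by
          have hpdf : Measurable (exponentialPDF 1) :=
            ENNReal.measurable_ofReal.comp (measurable_exponentialPDFReal 1)
          rw [show expMeasure 1 = volume.withDensity (exponentialPDF 1) from rfl,
            lintegral_withDensity_eq_lintegral_mul _ hpdf ?_]
          · rfl
          · refine ENNReal.measurable_ofReal.comp (Measurable.ite ?_ ?_ measurable_const)
            · exact measurableSet_le measurable_const
                (measurable_const.sub (measurable_id.div_const _))
            · exact ((continuous_const.sub (Real.continuous_exp.comp
                (continuous_const.sub (continuous_id.div_const _)).neg)).pow n).measurable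
      _ = ENNReal.ofReal ((1 - exp (-t)) ^ (n + 1)) := lint_key n t ht

open MeasureTheory ProbabilityTheory in
/-- If `E_1, …, E_n` are i.i.d. rate-one exponentials, then `∑_{i=1}^n E_i/i`
has the same distribution as `max(E_1, …, E_n)`: for every `t ≥ 0`,
`P(∑_{i=1}^n E_i/i ≤ t) = (1 − e^{−t})^n`. -/
theorem statement16 {Ω : Type*} [MeasureSpace Ω] [IsProbabilityMeasure (ℙ : Measure Ω)]
    (n : ℕ) (E : ℕ → Ω → ℝ)
    (hEmeas : ∀ i, Measurable (E i))
    (hEindep : iIndepFun E ℙ)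
    (hEexp : ∀ i, 1 ≤ i → i ≤ n → Measure.map (E i) ℙ = expMeasure 1)
    (t : ℝ) (ht : 0 ≤ t) :
    ℙ {ω | ∑ i ∈ Finset.Icc 1 n, E i ω / (i : ℝ) ≤ t}
      = ENNReal.ofReal ((1 - Real.exp (-t)) ^ n) :=
  key_lemma E hEmeas hEindep n hEexp t ht
end

section
/- Fix reals α > 1/2 and δ ∈ ℝ, and for each integer n ≥ 2 define ρ_n = 1 − (2α(n−1) + (n+1)((1+2α)·b_{n,2α} − 1)) / ((n−1)(2α−1)(1 + (δ²−1)·b_{n,2α} − δ²·b_{n,α}²)), where b_{n,x} = ∏_{i=1}^n i/(x+i). Then lim_{n→∞} n·ρ_n = 2/(2α−1). -/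
open Filter Topology

lemma prod_eq_gammaSeq (s : ℝ) (hs : 0 < s) {n : ℕ} (hn : 1 ≤ n) :
    ∏ i ∈ Finset.Icc 1 n, (i : ℝ) / (s + i)
      = s * Real.GammaSeq s n * (n : ℝ) ^ (-s) := by
  have hn0 : (0:ℝ) < (n:ℝ) := by exact_mod_cast hn
  have hprodpos : 0 < ∏ i ∈ Finset.Icc 1 n, (s + (i:ℝ)) := by
    apply Finset.prod_pos
    intro i hi
    have : (0:ℝ) ≤ i := Nat.cast_nonneg i
    linarith
  have h1 : ∀ m : ℕ, ∏ j ∈ Finset.range (m+1), (s + (j:ℝ))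
      = s * ∏ i ∈ Finset.Icc 1 m, (s + (i:ℝ)) := by
    intro m
    induction m with
    | zero => simp
    | succ k ih =>
      rw [Finset.prod_range_succ, ih, Finset.prod_Icc_succ_top (by omega : 1 ≤ k+1)]
      push_cast; ring
  have h2 : ∏ i ∈ Finset.Icc 1 n, (i:ℝ) = ((n.factorial : ℕ) : ℝ) := by
    rw [← Nat.cast_prod, ← Finset.Ico_add_one_right_eq_Icc, Finset.prod_Ico_id_eq_factorial]
  rw [Finset.prod_div_distrib, h2, Real.GammaSeq, h1 n]
  rw [Real.rpow_neg hn0.le]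
  have hns : (0:ℝ) < (n:ℝ) ^ s := Real.rpow_pos_of_pos hn0 s
  field_simp

lemma aux_tendsto (s t : ℝ) (hs : 0 < s) (hts : t < s) :
    Tendsto (fun n : ℕ => (n : ℝ) ^ t * ∏ i ∈ Finset.Icc 1 n, (i : ℝ) / (s + i))
      atTop (𝓝 0) := by
  have key : Tendsto (fun n : ℕ => s * Real.GammaSeq s n * (n : ℝ) ^ (t - s))
      atTop (𝓝 0) := by
    have h1 : Tendsto (fun n : ℕ => s * Real.GammaSeq s n) atTop (𝓝 (s * Real.Gamma s)) :=
      (Real.GammaSeq_tendsto_Gamma s).const_mul s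
    have h2 : Tendsto (fun n : ℕ => (n : ℝ) ^ (t - s)) atTop (𝓝 0) := by
      have := (tendsto_rpow_neg_atTop (y := s - t) (by linarith)).comp
        tendsto_natCast_atTop_atTop (α := ℕ)
      simpa [neg_sub, Function.comp_def] using this
    simpa using h1.mul h2
  apply key.congr'
  filter_upwards [eventually_ge_atTop 1] with n hn
  have hn0 : (0:ℝ) < (n:ℝ) := by exact_mod_cast hn
  rw [prod_eq_gammaSeq s hs hn, show t - s = t + -s from by ring, Real.rpow_add hn0]
  ring

set_option maxHeartbeats 800000 in
/-- For `α > 1/2` and any `δ`, the interspecies correlation coefficient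
`ρ_n = 1 − (2α(n−1) + (n+1)((1+2α) b_{n,2α} − 1)) / ((n−1)(2α−1)(1 + (δ²−1) b_{n,2α} − δ² b_{n,α}²))`
satisfies `n · ρ_n → 2/(2α−1)` as `n → ∞`, where `b_{n,x} = ∏_{i=1}^n i/(x+i)`. -/
theorem statement19 (α δ : ℝ) (hα : 1 / 2 < α) :
    Tendsto (fun n : ℕ =>
        (n : ℝ) *
          (1 - (2 * α * ((n : ℝ) - 1)
              + ((n : ℝ) + 1) * ((1 + 2 * α) * (∏ i ∈ Finset.Icc 1 n, (i : ℝ) / (2 * α + i)) - 1))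
            / (((n : ℝ) - 1) * (2 * α - 1)
              * (1 + (δ ^ 2 - 1) * (∏ i ∈ Finset.Icc 1 n, (i : ℝ) / (2 * α + i))
                - δ ^ 2 * (∏ i ∈ Finset.Icc 1 n, (i : ℝ) / (α + i)) ^ 2))))
      atTop (nhds (2 / (2 * α - 1))) := by
  have hαpos : (0:ℝ) < α := by linarith
  have h2α : (0:ℝ) < 2 * α := by linarith
  set B : ℕ → ℝ := fun n => ∏ i ∈ Finset.Icc 1 n, (i : ℝ) / (2 * α + i) with hB
  set A : ℕ → ℝ := fun n => ∏ i ∈ Finset.Icc 1 n, (i : ℝ) / (α + i) with hA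
  -- B → 0
  have hB0 : Tendsto B atTop (𝓝 0) := by
    have h : Tendsto (fun n : ℕ => (n:ℝ) ^ (0:ℝ) * B n) atTop (𝓝 0) :=
      aux_tendsto (2*α) 0 h2α (by linarith)
    apply h.congr
    intro n; rw [Real.rpow_zero, one_mul]
  -- n * B → 0
  have hnB : Tendsto (fun n : ℕ => (n:ℝ) * B n) atTop (𝓝 0) := by
    have h : Tendsto (fun n : ℕ => (n:ℝ) ^ (1:ℝ) * B n) atTop (𝓝 0) :=
      aux_tendsto (2*α) 1 h2α (by linarith)
    apply h.congr
    intro n; rw [Real.rpow_one]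
  -- A² → 0
  have hA0 : Tendsto (fun n : ℕ => (A n)^2) atTop (𝓝 0) := by
    have h : Tendsto (fun n : ℕ => (n:ℝ) ^ (0:ℝ) * A n) atTop (𝓝 0) :=
      aux_tendsto α 0 hαpos (by linarith)
    have h' : Tendsto A atTop (𝓝 0) := by
      apply h.congr; intro n; rw [Real.rpow_zero, one_mul]
    have h2 := h'.mul h'
    rw [mul_zero] at h2
    apply h2.congr; intro n; rw [← pow_two]
  -- n * A² → 0
  have hnA2 : Tendsto (fun n : ℕ => (n:ℝ) * (A n)^2) atTop (𝓝 0) := by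
    have h : Tendsto (fun n : ℕ => (n:ℝ) ^ ((1:ℝ)/2) * A n) atTop (𝓝 0) :=
      aux_tendsto α (1/2) hαpos (by linarith)
    have h2 := h.mul h
    rw [mul_zero] at h2
    apply h2.congr'
    filter_upwards [] with n
    have hn0 : (0:ℝ) ≤ (n:ℝ) := Nat.cast_nonneg n
    have hsq : (n:ℝ) ^ ((1:ℝ)/2) * (n:ℝ) ^ ((1:ℝ)/2) = (n:ℝ) := by
      rw [← Real.rpow_add' hn0 (by norm_num)]
      norm_num
    calc ((n:ℝ)^((1:ℝ)/2) * A n) * ((n:ℝ)^((1:ℝ)/2) * A n)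
        = ((n:ℝ)^((1:ℝ)/2) * (n:ℝ)^((1:ℝ)/2)) * (A n * A n) := by ring
      _ = (n:ℝ) * (A n)^2 := by rw [hsq, ← pow_two]
  -- (n-1)/n → 1 and (n+1)/n → 1
  have hr : Tendsto (fun n : ℕ => ((n:ℝ) - 1)/(n:ℝ)) atTop (𝓝 1) := by
    have h1 : Tendsto (fun n : ℕ => 1 - 1/(n:ℝ)) atTop (𝓝 (1 - 0)) :=
      tendsto_const_nhds.sub tendsto_one_div_atTop_nhds_zero_nat
    rw [show (1:ℝ) = 1 - 0 by norm_num]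
    apply h1.congr'
    filter_upwards [eventually_ge_atTop 1] with n hn
    have hn0 : (n:ℝ) ≠ 0 := by
      have : (0:ℝ) < n := by exact_mod_cast hn
      exact this.ne'
    field_simp
    ring
  have hs1 : Tendsto (fun n : ℕ => ((n:ℝ) + 1)/(n:ℝ)) atTop (𝓝 1) := by
    have h1 : Tendsto (fun n : ℕ => 1 + 1/(n:ℝ)) atTop (𝓝 (1 + 0)) :=
      tendsto_const_nhds.add tendsto_one_div_atTop_nhds_zero_nat
    rw [show (1:ℝ) = 1 + 0 by norm_num]
    apply h1.congr'
    filter_upwards [eventually_ge_atTop 1] with n hn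
    have hn0 : (n:ℝ) ≠ 0 := by
      have : (0:ℝ) < n := by exact_mod_cast hn
      exact this.ne'
    field_simp
    ring
  -- E → 1
  have hE : Tendsto (fun n : ℕ => 1 + (δ^2 - 1) * B n - δ^2 * (A n)^2) atTop (𝓝 1) := by
    have h : Tendsto (fun n : ℕ => 1 + (δ^2 - 1) * B n - δ^2 * (A n)^2) atTop
        (𝓝 (1 + (δ^2-1)*0 - δ^2*0)) :=
      (tendsto_const_nhds.add (hB0.const_mul _)).sub (hA0.const_mul _)
    simpa using h
  have hEne : ∀ᶠ n in atTop, (1 + (δ^2 - 1) * B n - δ^2 * (A n)^2) ≠ 0 :=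
    hE.eventually_ne one_ne_zero
  -- limit of the nice form
  have hnum : Tendsto (fun n : ℕ =>
      2 + ((n:ℝ)-1)/(n:ℝ) * ((2*α-1) * ((δ^2-1) * ((n:ℝ) * B n) - δ^2 * ((n:ℝ) * (A n)^2)))
        - ((n:ℝ)+1)/(n:ℝ) * ((1+2*α) * ((n:ℝ) * B n))) atTop (𝓝 2) := by
    have h : Tendsto (fun n : ℕ =>
        2 + ((n:ℝ)-1)/(n:ℝ) * ((2*α-1) * ((δ^2-1) * ((n:ℝ) * B n) - δ^2 * ((n:ℝ) * (A n)^2)))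
          - ((n:ℝ)+1)/(n:ℝ) * ((1+2*α) * ((n:ℝ) * B n))) atTop
        (𝓝 (2 + 1 * ((2*α-1) * ((δ^2-1)*0 - δ^2*0)) - 1 * ((1+2*α) * 0))) :=
      (tendsto_const_nhds.add (hr.mul (((hnB.const_mul _).sub
        (hnA2.const_mul _)).const_mul _))).sub (hs1.mul (hnB.const_mul _))
    simpa using h
  have hden : Tendsto (fun n : ℕ =>
      ((n:ℝ)-1)/(n:ℝ) * (2*α-1) * (1 + (δ^2 - 1) * B n - δ^2 * (A n)^2)) atTop
      (𝓝 (2*α - 1)) := by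
    have h := (hr.mul (tendsto_const_nhds (x := 2*α-1))).mul hE
    simpa using h
  have hnice := hnum.div hden (by intro h; nlinarith)
  -- eventual equality
  apply hnice.congr'
  filter_upwards [hEne, eventually_ge_atTop 2] with n hEn hn
  have hn2 : (2:ℝ) ≤ (n:ℝ) := by exact_mod_cast hn
  have hn0 : (n:ℝ) ≠ 0 := by intro h; nlinarith
  have hn1 : (n:ℝ) - 1 ≠ 0 := by intro h; nlinarith
  have hα1 : (2*α - 1 : ℝ) ≠ 0 := by intro h; nlinarith
  show _ = (n:ℝ) * (1 - (2 * α * ((n:ℝ) - 1) + ((n:ℝ) + 1) * ((1 + 2 * α) * B n - 1))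
      / (((n:ℝ) - 1) * (2 * α - 1) * (1 + (δ ^ 2 - 1) * B n - δ ^ 2 * (A n) ^ 2)))
  rw [Pi.div_apply]
  field_simp
  ring
end
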